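/- arXiv:1510.05549 — 7 statements merged into one kernel-verified Lean document; each statement's English description precedes it below -/
import Mathlib

section
/- Let D be a derivation of the free Lie algebra Lie[a,b] such that D([a,b]) = 0. Then D(a) is a push-invariant polynomial. -/
attribute [local instance 100] LieRing.ofAssociativeRing

/-- The free Lie algebra Lie[a,b] on two generators over ℚ. -/
abbrev L := FreeLieAlgebra ℚ (Fin 2)
/-- The free associative algebra ℚ⟨a,b⟩. -/
abbrev FA := FreeAlgebra ℚ (Fin 2)
/-- The generator a. -/
noncomputable def la : L := FreeLieAlgebra.of ℚ 0
/-- The generator b. -/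
noncomputable def lb : L := FreeLieAlgebra.of ℚ 1
/-- The canonical embedding of Lie[a,b] into ℚ⟨a,b⟩ (with commutator bracket). -/
noncomputable def theta : L →ₗ⁅ℚ⁆ FA := FreeLieAlgebra.lift ℚ (FreeAlgebra.ι ℚ)
/-- The coefficient of the word w (a = 0, b = 1) in a noncommutative polynomial. -/
noncomputable def coeffOf (p : FA) (w : List (Fin 2)) : ℚ :=
  (FreeAlgebra.equivMonoidAlgebraFreeMonoid (R := ℚ) p).coeff (FreeMonoid.ofList w)

/-- push on words: push(a^{i₀} b ⋯ a^{i_{r-1}} b a^{i_r}) = a^{i_r} b a^{i₀} b ⋯ b a^{i_{r-1}};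
words containing no b are fixed. -/
def pushWord (w : List (Fin 2)) : List (Fin 2) :=
  let T := (w.reverse.takeWhile (fun x => x = 0)).reverse
  let S := w.take (w.length - T.length)
  if S = [] then w else T ++ [(1 : Fin 2)] ++ S.dropLast

/-- The linear operator push on ℚ⟨a,b⟩, defined on monomials by `pushWord`. -/
noncomputable def pushA (p : FA) : FA :=
  (FreeAlgebra.equivMonoidAlgebraFreeMonoid (R := ℚ) (X := Fin 2)).symm
    (MonoidAlgebra.ofCoeff (Finsupp.mapDomain (fun m => FreeMonoid.ofList (pushWord m.toList))
      (FreeAlgebra.equivMonoidAlgebraFreeMonoid (R := ℚ) p).coeff))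

/-! ### Auxiliary material -/

lemma fin2_cases (x : Fin 2) : x = 0 ∨ x = 1 := by omega

lemma tw_replicate (k : ℕ) :
    (List.replicate k (0 : Fin 2)).takeWhile (fun x => x = 0) = List.replicate k 0 := by
  induction k with
  | zero => simp
  | succ k ih => simp [List.replicate_succ, List.takeWhile_cons, ih]

lemma tw_replicate_one (k : ℕ) (s : List (Fin 2)) :
    (List.replicate k (0 : Fin 2) ++ 1 :: s).takeWhile (fun x => x = 0) =
      List.replicate k 0 := by
  induction k with
  | zero => simp [List.takeWhile_cons]
  | succ k ih => simp [List.replicate_succ, List.takeWhile_cons, ih]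

/-- the inverse of `pushWord` -/
def pullWord (w : List (Fin 2)) : List (Fin 2) :=
  let T := w.takeWhile (fun x => x = 0)
  let S := w.drop T.length
  if S = [] then w else S.tail ++ [(1 : Fin 2)] ++ T

lemma pushWord_replicate (k : ℕ) :
    pushWord (List.replicate k (0 : Fin 2)) = List.replicate k 0 := by
  unfold pushWord
  simp [List.reverse_replicate, tw_replicate]

lemma pullWord_replicate (k : ℕ) :
    pullWord (List.replicate k (0 : Fin 2)) = List.replicate k 0 := by
  unfold pullWord
  simp [tw_replicate]

lemma pushWord_eq (S' : List (Fin 2)) (k : ℕ) :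
    pushWord (S' ++ [1] ++ List.replicate k 0) = List.replicate k 0 ++ [1] ++ S' := by
  unfold pushWord
  have hrev : (S' ++ [1] ++ List.replicate k (0:Fin 2)).reverse
      = List.replicate k 0 ++ 1 :: S'.reverse := by
    simp [List.reverse_replicate]
  rw [hrev, tw_replicate_one]
  have hlen : (S' ++ [1] ++ List.replicate k (0:Fin 2)).length - (List.replicate k (0:Fin 2)).reverse.length
      = (S' ++ [1]).length := by simp; omega
  simp only [List.reverse_replicate] at hlen ⊢
  rw [hlen]
  have htake : (S' ++ [1] ++ List.replicate k (0:Fin 2)).take (S' ++ [1]).length = S' ++ [1] := by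
    rw [show S' ++ [(1:Fin 2)] ++ List.replicate k 0 = (S' ++ [1]) ++ List.replicate k 0 from by simp]
    exact List.take_left
  rw [htake]
  simp [List.reverse_replicate]

lemma pullWord_eq (S' : List (Fin 2)) (k : ℕ) :
    pullWord (List.replicate k 0 ++ [1] ++ S') = S' ++ [1] ++ List.replicate k 0 := by
  unfold pullWord
  have h1 : List.replicate k (0:Fin 2) ++ [1] ++ S' = List.replicate k 0 ++ 1 :: S' := by simp
  rw [h1, tw_replicate_one]
  have h2 : (List.replicate k (0:Fin 2) ++ 1 :: S').drop (List.replicate k (0:Fin 2)).length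
      = 1 :: S' := List.drop_left
  simp only [List.length_replicate] at h2 ⊢
  rw [h2]
  simp

/-- decomposition with trailing zeros -/
lemma decomp_right (w : List (Fin 2)) :
    (∃ k, w = List.replicate k 0) ∨ ∃ S' k, w = S' ++ [1] ++ List.replicate k 0 := by
  induction w using List.reverseRecOn with
  | nil => exact Or.inl ⟨0, rfl⟩
  | append_singleton u x ih =>
    rcases fin2_cases x with rfl | rfl
    · rcases ih with ⟨k, rfl⟩ | ⟨S', k, rfl⟩
      · exact Or.inl ⟨k + 1, by rw [List.replicate_succ']⟩
      · refine Or.inr ⟨S', k + 1, ?_⟩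
        rw [List.replicate_succ' (n := k)]
        simp
    · exact Or.inr ⟨u, 0, by simp⟩

/-- decomposition with leading zeros -/
lemma decomp_left (w : List (Fin 2)) :
    (∃ k, w = List.replicate k 0) ∨ ∃ S' k, w = List.replicate k 0 ++ [1] ++ S' := by
  induction w with
  | nil => exact Or.inl ⟨0, rfl⟩
  | cons x u ih =>
    rcases fin2_cases x with rfl | rfl
    · rcases ih with ⟨k, rfl⟩ | ⟨S', k, rfl⟩
      · exact Or.inl ⟨k + 1, by rw [List.replicate_succ]⟩
      · exact Or.inr ⟨S', k + 1, by rw [List.replicate_succ]; simp⟩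
    · exact Or.inr ⟨u, 0, by simp⟩

lemma pull_push (w : List (Fin 2)) : pullWord (pushWord w) = w := by
  rcases decomp_right w with ⟨k, rfl⟩ | ⟨S', k, rfl⟩
  · rw [pushWord_replicate, pullWord_replicate]
  · rw [pushWord_eq, pullWord_eq]

lemma push_pull (w : List (Fin 2)) : pushWord (pullWord w) = w := by
  rcases decomp_left w with ⟨k, rfl⟩ | ⟨S', k, rfl⟩
  · rw [pullWord_replicate, pushWord_replicate]
  · rw [pullWord_eq, pushWord_eq]

noncomputable abbrev eqv := FreeAlgebra.equivMonoidAlgebraFreeMonoid (R := ℚ) (X := Fin 2)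

lemma eqv_iota (i : Fin 2) :
    eqv (FreeAlgebra.ι ℚ i) = MonoidAlgebra.single (FreeMonoid.of i) 1 := by
  simp [FreeAlgebra.equivMonoidAlgebraFreeMonoid]

lemma coeff_mul_iota (x : FA) (i : Fin 2) (w : List (Fin 2)) :
    coeffOf (x * FreeAlgebra.ι ℚ i) (w ++ [i]) = coeffOf x w := by
  unfold coeffOf
  rw [map_mul, eqv_iota]
  rw [MonoidAlgebra.mul_single_apply_aux (m₂ := FreeMonoid.ofList w)]
  · rw [mul_one]
  · intro a _
    constructor
    · intro h
      have h1 : (a.toList ++ [i] : List (Fin 2)) = w ++ [i] := by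
        have := congrArg FreeMonoid.toList h
        simpa using this
      have := List.append_cancel_right h1
      exact FreeMonoid.toList.injective (by simpa using this)
    · rintro rfl; rfl

lemma coeff_mul_iota_ne (x : FA) (i j : Fin 2) (h : j ≠ i) (w : List (Fin 2)) :
    coeffOf (x * FreeAlgebra.ι ℚ i) (w ++ [j]) = 0 := by
  unfold coeffOf
  rw [map_mul, eqv_iota]
  apply MonoidAlgebra.mul_single_apply_of_not_exists_mul
  rintro ⟨d, hd⟩
  have h1 : (w ++ [j] : List (Fin 2)) = d.toList ++ [i] := by
    have := congrArg FreeMonoid.toList hd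
    simpa using this
  have := List.getLast_congr (l₁ := w ++ [j]) (l₂ := d.toList ++ [i]) (by simp) (by simp) h1
  simp at this
  exact h this

lemma coeff_iota_mul (x : FA) (i : Fin 2) (w : List (Fin 2)) :
    coeffOf (FreeAlgebra.ι ℚ i * x) (i :: w) = coeffOf x w := by
  unfold coeffOf
  rw [map_mul, eqv_iota]
  rw [MonoidAlgebra.single_mul_apply_aux (m₂ := FreeMonoid.ofList w)]
  · rw [one_mul]
  · intro a _
    constructor
    · intro h
      have h1 : (i :: a.toList : List (Fin 2)) = i :: w := by
        have := congrArg FreeMonoid.toList h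
        simpa using this
      exact FreeMonoid.toList.injective (by simpa using h1)
    · rintro rfl; rfl

lemma coeff_iota_mul_ne (x : FA) (i j : Fin 2) (h : j ≠ i) (w : List (Fin 2)) :
    coeffOf (FreeAlgebra.ι ℚ i * x) (j :: w) = 0 := by
  unfold coeffOf
  rw [map_mul, eqv_iota]
  apply MonoidAlgebra.single_mul_apply_of_not_exists_mul
  rintro ⟨d, hd⟩
  have h1 : (j :: w : List (Fin 2)) = i :: d.toList := by
    have := congrArg FreeMonoid.toList hd
    simpa using this
  exact h (by injection h1)

lemma coeffOf_add (x y : FA) (w : List (Fin 2)) :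
    coeffOf (x + y) w = coeffOf x w + coeffOf y w := by
  rw [coeffOf, coeffOf, coeffOf, map_add]
  exact Finsupp.add_apply _ _ _

/-- If D is a derivation of Lie[a,b] with D([a,b]) = 0, then D(a) is a push-invariant
polynomial. -/
theorem derivation_killing_ab_push_invariant (D : LieDerivation ℚ L L)
    (hD : D ⁅la, lb⁆ = 0) :
    pushA (theta (D la)) = theta (D la) := by
  set p : FA := theta (D la) with hp
  set q : FA := theta (D lb) with hq
  set A : FA := FreeAlgebra.ι ℚ 0 with hA
  set B : FA := FreeAlgebra.ι ℚ 1 with hB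
  -- the key identity p·B + A·q = B·p + q·A
  have key : p * B + A * q = B * p + q * A := by
    rw [LieDerivation.apply_lie_eq_add] at hD
    have h2 := congrArg theta hD
    rw [map_add, LieHom.map_lie, LieHom.map_lie, map_zero] at h2
    have h3 : theta la = A := FreeLieAlgebra.lift_of_apply _ _
    have h4 : theta lb = B := FreeLieAlgebra.lift_of_apply _ _
    rw [h3, h4, Ring.lie_def, Ring.lie_def] at h2
    rw [← sub_eq_zero]
    calc p * B + A * q - (B * p + q * A)
        = (A * q - q * A) + (p * B - B * p) := by abel
      _ = 0 := h2
  -- the coefficientwise form of the key identity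
  have keyc : ∀ u : List (Fin 2),
      coeffOf (p * B) u + coeffOf (A * q) u = coeffOf (B * p) u + coeffOf (q * A) u := by
    intro u
    rw [← coeffOf_add, ← coeffOf_add, key]
  -- rule 1 : c(0v) = -d(v1)
  have R1 : ∀ v : List (Fin 2), coeffOf p (0 :: v) = -(coeffOf q (v ++ [1])) := by
    intro v
    have h := keyc ((0 : Fin 2) :: v ++ [1])
    rw [show ((0 : Fin 2) :: v ++ [1]) = ((0 :: v) ++ [1]) from rfl] at h
    rw [coeff_mul_iota, coeff_mul_iota_ne _ _ _ (by decide)] at h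
    rw [show (((0 : Fin 2) :: v) ++ [1]) = ((0 : Fin 2) :: (v ++ [1])) from rfl] at h
    rw [coeff_iota_mul, coeff_iota_mul_ne _ _ _ (by decide)] at h
    linarith
  -- rule 2 : c(1v) = c(v1)
  have R2 : ∀ v : List (Fin 2), coeffOf p (1 :: v) = coeffOf p (v ++ [1]) := by
    intro v
    have h := keyc ((1 : Fin 2) :: v ++ [1])
    rw [show ((1 : Fin 2) :: v ++ [1]) = ((1 :: v) ++ [1]) from rfl] at h
    rw [coeff_mul_iota, coeff_mul_iota_ne _ _ _ (by decide)] at h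
    rw [show (((1 : Fin 2) :: v) ++ [1]) = ((1 : Fin 2) :: (v ++ [1])) from rfl] at h
    rw [coeff_iota_mul, coeff_iota_mul_ne _ _ _ (by decide)] at h
    linarith
  -- rule 3 : d(v0) = d(0v)
  have R3 : ∀ v : List (Fin 2), coeffOf q (v ++ [0]) = coeffOf q (0 :: v) := by
    intro v
    have h := keyc ((0 : Fin 2) :: v ++ [0])
    rw [show ((0 : Fin 2) :: v ++ [0]) = ((0 :: v) ++ [0]) from rfl] at h
    rw [coeff_mul_iota, coeff_mul_iota_ne _ _ _ (by decide)] at h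
    rw [show (((0 : Fin 2) :: v) ++ [0]) = ((0 : Fin 2) :: (v ++ [0])) from rfl] at h
    rw [coeff_iota_mul, coeff_iota_mul_ne _ _ _ (by decide)] at h
    linarith
  -- rule 4 : c(v0) = -d(1v)
  have R4 : ∀ v : List (Fin 2), coeffOf p (v ++ [0]) = -(coeffOf q (1 :: v)) := by
    intro v
    have h := keyc ((1 : Fin 2) :: v ++ [0])
    rw [show ((1 : Fin 2) :: v ++ [0]) = ((1 :: v) ++ [0]) from rfl] at h
    rw [coeff_mul_iota, coeff_mul_iota_ne _ _ _ (by decide)] at h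
    rw [show (((1 : Fin 2) :: v) ++ [0]) = ((1 : Fin 2) :: (v ++ [0])) from rfl] at h
    rw [coeff_iota_mul, coeff_iota_mul_ne _ _ _ (by decide)] at h
    linarith
  -- shifting a block of zeros through d
  have dshift : ∀ (k : ℕ) (v : List (Fin 2)),
      coeffOf q (List.replicate k 0 ++ v) = coeffOf q (v ++ List.replicate k 0) := by
    intro k
    induction k with
    | zero => intro v; simp
    | succ k ih =>
      intro v
      have h1 : List.replicate (k+1) (0 : Fin 2) ++ v = 0 :: (List.replicate k 0 ++ v) := by
        rw [List.replicate_succ]; simp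
      rw [h1, ← R3 (List.replicate k 0 ++ v)]
      have h2 : (List.replicate k (0 : Fin 2) ++ v) ++ [0] = List.replicate k 0 ++ (v ++ [0]) := by
        simp
      rw [h2, ih (v ++ [0])]
      rw [show v ++ [(0 : Fin 2)] ++ List.replicate k 0 = v ++ ((0 : Fin 2) :: List.replicate k 0) from by simp]
      rw [← List.replicate_succ]
  -- the main invariance of coefficients of p under push
  have main : ∀ w : List (Fin 2), coeffOf p (pushWord w) = coeffOf p w := by
    intro w
    rcases decomp_right w with ⟨k, rfl⟩ | ⟨S', k, rfl⟩
    · rw [pushWord_replicate]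
    · rw [pushWord_eq]
      cases k with
      | zero =>
        simpa using R2 S'
      | succ m =>
        have hL : List.replicate (m+1) (0 : Fin 2) ++ [1] ++ S'
            = 0 :: (List.replicate m 0 ++ [1] ++ S') := by
          rw [List.replicate_succ]; simp
        have hR : S' ++ [1] ++ List.replicate (m+1) (0 : Fin 2)
            = (S' ++ [1] ++ List.replicate m 0) ++ [0] := by
          rw [List.replicate_succ' (n := m)]; simp
        rw [hL, hR, R1, R4]
        congr 1
        have e1 : List.replicate m (0 : Fin 2) ++ [1] ++ S' ++ [1]
            = List.replicate m 0 ++ ([1] ++ S' ++ [1]) := by simp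
        have e2 : (1 : Fin 2) :: (S' ++ [1] ++ List.replicate m 0)
            = ([1] ++ S' ++ [1]) ++ List.replicate m 0 := by simp
        rw [e1, e2, dshift]
  -- conclude
  have hpull : ∀ w : List (Fin 2), coeffOf p (pullWord w) = coeffOf p w := by
    intro w
    conv_rhs => rw [← push_pull w]
    rw [main]
  let pushEquiv : FreeMonoid (Fin 2) ≃ FreeMonoid (Fin 2) :=
    { toFun := fun m => FreeMonoid.ofList (pushWord m.toList)
      invFun := fun m => FreeMonoid.ofList (pullWord m.toList)
      left_inv := fun m => by simp [pull_push]
      right_inv := fun m => by simp [push_pull] }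
  have hmap : Finsupp.mapDomain (fun m => FreeMonoid.ofList (pushWord m.toList)) (eqv p).coeff
      = (eqv p).coeff := by
    rw [show (fun m : FreeMonoid (Fin 2) => FreeMonoid.ofList (pushWord m.toList))
        = ⇑pushEquiv from rfl]
    rw [← Finsupp.equivMapDomain_eq_mapDomain]
    ext u
    rw [Finsupp.equivMapDomain_apply]
    have h1 : pushEquiv.symm u = FreeMonoid.ofList (pullWord u.toList) := rfl
    rw [h1]
    have h2 : (eqv p).coeff (FreeMonoid.ofList (pullWord u.toList))
        = coeffOf p (pullWord u.toList) := rfl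
    have h3 : (eqv p).coeff u = coeffOf p u.toList := by
      rw [show u = FreeMonoid.ofList u.toList from (FreeMonoid.ofList_toList u).symm]
      rfl
    rw [h2, h3, hpull]
  show eqv.symm (MonoidAlgebra.ofCoeff (Finsupp.mapDomain _ (eqv p).coeff)) = p
  rw [hmap, MonoidAlgebra.ofCoeff_coeff]
  exact eqv.symm_apply_apply p
end

section
/- Every derivation ε_{2i} (i ≥ 0) of Lie[a,b] annihilates the bracket [a,b]: ε_{2i}([a,b]) = 0. -/
attribute [local instance] LieRing.ofAssociativeRing

/-- ε_{2i}(a) = ad(a)^{2i}(b). -/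
noncomputable def epsA (i : ℕ) : L := ((LieAlgebra.ad ℚ L la) ^ (2 * i)) lb

/-- ε_{2i}(b) = Σ_{j=0}^{i-1} (-1)^j [ad(a)^j(b), ad(a)^{2i-1-j}(b)]. -/
noncomputable def epsB (i : ℕ) : L :=
  ∑ j ∈ Finset.range i, ((-1 : ℚ) ^ j) •
    ⁅((LieAlgebra.ad ℚ L la) ^ j) lb, ((LieAlgebra.ad ℚ L la) ^ (2 * i - 1 - j)) lb⁆

/-- Iterated bracket x j = ad(a)^j(b). -/
noncomputable def xx (j : ℕ) : L := ((LieAlgebra.ad ℚ L la) ^ j) lb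

lemma xx_def (j : ℕ) : ((LieAlgebra.ad ℚ L la) ^ j) lb = xx j := rfl

lemma xx_succ (j : ℕ) : ⁅la, xx j⁆ = xx (j + 1) := by
  simp [xx, pow_succ', Module.End.mul_apply, LieAlgebra.ad_apply]

/-- Every derivation ε_{2i} annihilates [a,b]. -/
theorem eps2i_kills_ab (i : ℕ) (D : LieDerivation ℚ L L)
    (ha : D la = epsA i) (hb : D lb = epsB i) :
    D ⁅la, lb⁆ = 0 := by
  rw [D.apply_lie_eq_add, ha, hb]
  have hA : epsA i = xx (2 * i) := rfl
  have hb0 : lb = xx 0 := by simp [xx]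
  set f : ℕ → L := fun j => ((-1 : ℚ) ^ j) • ⁅xx j, xx (2 * i - j)⁆ with hf
  have key : ⁅la, epsB i⁆ = ∑ j ∈ Finset.range i, (f j - f (j + 1)) := by
    have hsum := map_sum (LieAlgebra.ad ℚ L la)
      (fun j => ((-1 : ℚ) ^ j) •
        ⁅((LieAlgebra.ad ℚ L la) ^ j) lb, ((LieAlgebra.ad ℚ L la) ^ (2 * i - 1 - j)) lb⁆)
      (Finset.range i)
    simp only [LieAlgebra.ad_apply] at hsum
    rw [epsB, hsum]
    refine Finset.sum_congr rfl fun j hj => ?_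
    have hji : j < i := Finset.mem_range.mp hj
    have h1 : 2 * i - 1 - j + 1 = 2 * i - j := by omega
    have h2 : 2 * i - (j + 1) = 2 * i - 1 - j := by omega
    rw [lie_smul, leibniz_lie]
    simp only [xx_def]
    rw [xx_succ, xx_succ, h1, hf]
    simp only [h2, pow_succ, neg_smul, mul_neg, mul_one, smul_add, sub_neg_eq_add]
    abel
  rw [key, Finset.sum_range_sub']
  have hfi : f i = 0 := by
    have : 2 * i - i = i := by omega
    simp [hf, this]
  rw [hfi, sub_zero, hf]
  simp only [pow_zero, one_smul]
  rw [hA, hb0, Nat.sub_zero, ← lie_skew (xx 0) (xx (2 * i))]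
  abel
end

section
/- The Poisson bracket {P,Q} = [P,Q] + D_P(Q) - D_Q(P) on Lie[a,b] satisfies [D_P, D_Q] = D_{{P,Q}} for all P, Q ∈ Lie[a,b], where D_P is the derivation with D_P(a) = 0 and D_P(b) = [b,P]. In particular, the Poisson bracket is a Lie bracket on the underlying vector space of Lie[a,b]. -/
attribute [local instance 100] LieRing.ofAssociativeRing
lemma lieSpan_range_of :
    LieSubalgebra.lieSpan ℚ L (Set.range (FreeLieAlgebra.of ℚ)) = ⊤ := by
  set S := LieSubalgebra.lieSpan ℚ L (Set.range (FreeLieAlgebra.of ℚ)) with hS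
  have hmem : ∀ x : Fin 2, FreeLieAlgebra.of ℚ x ∈ S := fun x =>
    LieSubalgebra.subset_lieSpan ⟨x, rfl⟩
  let f : L →ₗ⁅ℚ⁆ S := FreeLieAlgebra.lift ℚ (fun x => ⟨FreeLieAlgebra.of ℚ x, hmem x⟩)
  have hcomp : S.incl.comp f = LieHom.id := by
    apply FreeLieAlgebra.hom_ext
    intro x
    simp [f, FreeLieAlgebra.lift_of_apply, LieHom.comp_apply]
  rw [eq_top_iff]
  intro z _
  have : S.incl (f z) = z := by
    have := congrArg (fun g : L →ₗ⁅ℚ⁆ L => g z) hcomp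
    simpa using this
  rw [← this]
  exact (f z).2

/-- The Poisson bracket {P,Q} = [P,Q] + D_P(Q) - D_Q(P), where D_P is the derivation with
D_P(a) = 0 and D_P(b) = [b,P], satisfies [D_P, D_Q] = D_{{P,Q}}; in particular it is
antisymmetric and satisfies the (Leibniz form of the) Jacobi identity. -/
theorem poisson_bracket_props (Dmap : L → LieDerivation ℚ L L)
    (hA : ∀ P : L, Dmap P la = 0) (hB : ∀ P : L, Dmap P lb = ⁅lb, P⁆) :
    (∀ P Q : L, ⁅Dmap P, Dmap Q⁆ = Dmap (⁅P, Q⁆ + Dmap P Q - Dmap Q P)) ∧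
    (∀ P Q : L, (⁅P, Q⁆ + Dmap P Q - Dmap Q P) = -(⁅Q, P⁆ + Dmap Q P - Dmap P Q)) ∧
    (∀ P Q R : L,
      let pb : L → L → L := fun S T => ⁅S, T⁆ + Dmap S T - Dmap T S
      pb P (pb Q R) = pb (pb P Q) R + pb Q (pb P R)) := by
  have h1 : ∀ P Q : L, ⁅Dmap P, Dmap Q⁆ = Dmap (⁅P, Q⁆ + Dmap P Q - Dmap Q P) := by
    intro P Q
    apply LieDerivation.ext_of_lieSpan_eq_top _ lieSpan_range_of
    rintro _ ⟨x, rfl⟩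
    fin_cases x
    · show ⁅Dmap P, Dmap Q⁆ la = Dmap (⁅P, Q⁆ + Dmap P Q - Dmap Q P) la
      rw [LieDerivation.commutator_apply, hA, hA, hA]
      simp
    · show ⁅Dmap P, Dmap Q⁆ lb = Dmap (⁅P, Q⁆ + Dmap P Q - Dmap Q P) lb
      rw [LieDerivation.commutator_apply, hB, hB, hB,
        LieDerivation.apply_lie_eq_add, LieDerivation.apply_lie_eq_add, hB, hB]
      rw [lie_sub, lie_add, leibniz_lie lb P Q, ← lie_skew ⁅lb, Q⁆ P]
      abel
  refine ⟨h1, ?_, ?_⟩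
  · intro P Q
    rw [← lie_skew P Q]
    abel
  · intro P Q R pb
    have hDB : ∀ S T X : L, Dmap (⁅S, T⁆ + Dmap S T - Dmap T S) X
        = Dmap S (Dmap T X) - Dmap T (Dmap S X) := by
      intro S T X
      rw [← h1, LieDerivation.commutator_apply]
    show pb P (pb Q R) = pb (pb P Q) R + pb Q (pb P R)
    simp only [pb]
    simp only [map_add, map_sub, hDB, LieDerivation.apply_lie_eq_add,
      lie_add, add_lie, lie_sub, sub_lie]
    rw [leibniz_lie P Q R]
    rw [← lie_skew (Dmap R P) Q]
    abel
end

section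
/- For Lie polynomials F, G in ℚ⟨a,b⟩ that lie in the subalgebra generated by C_i = ad(a)^{i-1}(b), the map ma satisfies ma(FG) = μ(ma(F), ma(G)), i.e. ma transforms the associative product into the mould product μ. -/
/-- A mould over ℚ: its depth-r component is its restriction to lists of length r
(a function of r commuting variables, identified with the corresponding ℚ-valued function). -/
abbrev Mould := List ℚ → ℚ

/-- The concatenation product of moulds:
μ(A,B)(u₁,…,u_r) = Σ_{i=0}^r A(u₁,…,u_i)·B(u_{i+1},…,u_r). -/
def muM (A B : Mould) : Mould := fun w =>
  ∑ i ∈ Finset.range (w.length + 1), A (w.take i) * B (w.drop i)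

/-- lu(A,B) = μ(A,B) - μ(B,A). -/
def luM (A B : Mould) : Mould := fun w => muM A B w - muM B A w

/-- The free associative algebra ℚ⟨C₁,C₂,…⟩, the letter n standing for C_{n+1} = ad(a)^n(b). -/
abbrev FC := FreeAlgebra ℚ ℕ

/-- The value of ma on the monomial C_{i₁}⋯C_{i_r} (letters n_k = i_k - 1):
ma(C_{i₁}⋯C_{i_r}) = (-1)^{i₁+⋯+i_r-r} u₁^{i₁-1}⋯u_r^{i_r-1}. -/
def maW (ws : List ℕ) : Mould := fun w =>
  if ws.length = w.length then
    ((-1 : ℚ) ^ ws.sum) * (List.zipWith (fun (u : ℚ) (n : ℕ) => u ^ n) w ws).prod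
  else 0

/-- The linear map ma from ℚ⟨C₁,C₂,…⟩ to moulds. -/
noncomputable def maF (x : FC) : Mould := fun w =>
  (FreeAlgebra.equivMonoidAlgebraFreeMonoid (R := ℚ) x).coeff.sum
    (fun ws c => c * maW ws.toList w)

/-- The coefficient of the word ws in an element of ℚ⟨C₁,C₂,…⟩. -/
noncomputable def coeffC (x : FC) (ws : List ℕ) : ℚ :=
  (FreeAlgebra.equivMonoidAlgebraFreeMonoid (R := ℚ) x).coeff (FreeMonoid.ofList ws)

attribute [local instance 100] LieRing.ofAssociativeRing

/-- The Lie subalgebra Lie[C₁,C₂,…] ⊂ ℚ⟨C₁,C₂,…⟩. -/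
noncomputable def lieC : LieSubalgebra ℚ FC :=
  LieSubalgebra.lieSpan ℚ FC (Set.range (FreeAlgebra.ι ℚ))

lemma maW_append (a b : List ℕ) (w : List ℚ) :
    maW (a ++ b) w = ∑ i ∈ Finset.range (w.length + 1), maW a (w.take i) * maW b (w.drop i) := by
  by_cases h : a.length + b.length = w.length
  · have ha : a.length ∈ Finset.range (w.length + 1) := by
      simp only [Finset.mem_range]; omega
    rw [Finset.sum_eq_single_of_mem a.length ha]
    · have ht : (w.take a.length).length = a.length := by
        simp only [List.length_take]; omega
      have hd : (w.drop a.length).length = b.length := by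
        simp only [List.length_drop]; omega
      have hw : w = w.take a.length ++ w.drop a.length := (List.take_append_drop _ _).symm
      simp only [maW, List.length_append, h, if_pos rfl, ht, hd]
      rw [show List.zipWith (fun (u : ℚ) (n : ℕ) => u ^ n) w (a ++ b)
            = List.zipWith (fun (u : ℚ) (n : ℕ) => u ^ n) (w.take a.length) a
              ++ List.zipWith (fun (u : ℚ) (n : ℕ) => u ^ n) (w.drop a.length) b by
        conv_lhs => rw [hw]
        exact List.zipWith_append ht]
      rw [List.prod_append, List.sum_append, pow_add]
      simp only [if_true]
      ring
    · intro i hi hne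
      have hi' : i ≤ w.length := by
        simpa [Finset.mem_range, Nat.lt_succ_iff] using hi
      have hti : (w.take i).length = i := by simp only [List.length_take]; omega
      rw [show maW a (w.take i) = 0 by simp [maW, hti, hne.symm]]
      ring
  · rw [show maW (a ++ b) w = 0 by
      simp only [maW, List.length_append]; rw [if_neg h]]
    refine (Finset.sum_eq_zero ?_).symm
    intro i hi
    have hi' : i ≤ w.length := by
      simpa [Finset.mem_range, Nat.lt_succ_iff] using hi
    have ht : (w.take i).length = i := by simp only [List.length_take]; omega
    have hd : (w.drop i).length = w.length - i := by simp only [List.length_drop]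
    by_cases h1 : a.length = i
    · have h2 : b.length ≠ w.length - i := by omega
      rw [show maW b (w.drop i) = 0 by simp [maW, hd, h2]]
      ring
    · rw [show maW a (w.take i) = 0 by simp [maW, ht, h1]]
      ring

/-- ma transforms the associative product into the mould product μ:
ma(FG) = μ(ma(F), ma(G)) for Lie polynomials F, G in ℚ⟨C₁,C₂,…⟩. -/
theorem ma_mul (F G : FC) (hF : F ∈ lieC) (hG : G ∈ lieC) :
    maF (F * G) = muM (maF F) (maF G) := by
  funext w
  set φ := FreeAlgebra.equivMonoidAlgebraFreeMonoid (R := ℚ)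
  have hmul : φ (F * G) = φ F * φ G := map_mul φ F G
  simp only [maF, muM, hmul, map_mul, MonoidAlgebra.mul_def, MonoidAlgebra.coeff_finsuppSum,
    MonoidAlgebra.coeff_single]
  rw [Finsupp.sum_sum_index (fun a => by ring) (fun a b c => by ring)]
  rw [Finsupp.sum_congr (g2 := fun a₁ b₁ => (φ G).coeff.sum fun a₂ b₂ =>
        (b₁ * b₂) * maW (a₁ * a₂).toList w)
      (fun a₁ _ => by
        rw [Finsupp.sum_sum_index (fun a => by ring) (fun a b c => by ring)]
        exact Finsupp.sum_congr fun a₂ _ => Finsupp.sum_single_index (by ring))]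
  have key : ∀ (a₁ a₂ : FreeMonoid ℕ), maW (a₁ * a₂).toList w
      = ∑ i ∈ Finset.range (w.length + 1),
          maW a₁.toList (w.take i) * maW a₂.toList (w.drop i) := fun a₁ a₂ =>
    maW_append a₁.toList a₂.toList w
  simp only [key, Finset.mul_sum]
  unfold Finsupp.sum
  beta_reduce
  rw [Finset.sum_congr rfl (fun a₁ _ => Finset.sum_comm), Finset.sum_comm]
  simp only [Finset.sum_mul_sum]
  exact Finset.sum_congr rfl fun i _ => Finset.sum_congr rfl fun a₁ _ =>
    Finset.sum_congr rfl fun a₂ _ => by ring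
end

section
/- For push-invariant moulds A and B, the swap operator intertwines the ari brackets: ari(swap(A), swap(B)) = swap(ari(A,B)). -/
/-- arit(B)·A for moulds in the variables u_i:
(arit(B)·A)(u₁,…,u_r) = Σ_{0≤k<ℓ<r} A(a⌈c)B(b) - Σ_{1≤k<ℓ≤r} A(a⌉c)B(b),
where a = (u₁,…,u_k), b = (u_{k+1},…,u_ℓ), c = (u_{ℓ+1},…,u_r), and a⌈c (resp. a⌉c)
contracts b together with the first entry of c (resp. the last entry of a) into its sum. -/
def aritU (B A : Mould) : Mould := fun w =>
  (∑ k ∈ Finset.range (w.length + 1), ∑ l ∈ Finset.range (w.length + 1),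
    if k < l ∧ l < w.length then
      A (w.take k ++ [((w.take (l + 1)).drop k).sum] ++ w.drop (l + 1)) *
        B ((w.take l).drop k)
    else 0)
  - (∑ k ∈ Finset.range (w.length + 1), ∑ l ∈ Finset.range (w.length + 1),
    if 1 ≤ k ∧ k < l ∧ l ≤ w.length then
      A (w.take (k - 1) ++ [((w.take l).drop (k - 1)).sum] ++ w.drop l) *
        B ((w.take l).drop k)
    else 0)

/-- The ari bracket (u-variable version): ari(A,B) = arit(B)·A - arit(A)·B + lu(A,B). -/
def ariU (A B : Mould) : Mould := fun w => aritU B A w - aritU A B w + luM A B w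

/-- arit(B)·A for moulds in the variables v_i:
(arit(B)·A)(v₁,…,v_r) = Σ_{0≤k<ℓ<r} A(a c) B(b⌋) - Σ_{1≤k<ℓ≤r} A(a c) B(⌊b),
where a = (v₁,…,v_k), b = (v_{k+1},…,v_ℓ), c = (v_{ℓ+1},…,v_r),
b⌋ subtracts v_{ℓ+1} from every entry of b, and ⌊b subtracts v_k. -/
def aritV (B A : Mould) : Mould := fun w =>
  (∑ k ∈ Finset.range (w.length + 1), ∑ l ∈ Finset.range (w.length + 1),
    if k < l ∧ l < w.length then
      A (w.take k ++ w.drop l) * B (((w.take l).drop k).map (fun x => x - w.getD l 0))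
    else 0)
  - (∑ k ∈ Finset.range (w.length + 1), ∑ l ∈ Finset.range (w.length + 1),
    if 1 ≤ k ∧ k < l ∧ l ≤ w.length then
      A (w.take k ++ w.drop l) * B (((w.take l).drop k).map (fun x => x - w.getD (k - 1) 0))
    else 0)

/-- The ari bracket (v-variable version): ari(A,B) = arit(B)·A - arit(A)·B + lu(A,B). -/
def ariV (A B : Mould) : Mould := fun w => aritV B A w - aritV A B w + luM A B w

/-- The variable change (v₁,…,v_r) ↦ (v_r, v_{r-1} - v_r, …, v₁ - v₂). -/
def swapList (w : List ℚ) : List ℚ :=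
  match w.reverse with
  | [] => []
  | x :: xs => x :: List.zipWith (fun p q => p - q) xs (x :: xs)

/-- The swap operator. -/
def swapM (A : Mould) : Mould := fun w => A (swapList w)

/-- The variable change (u₁,…,u_r) ↦ (-u₁-⋯-u_r, u₁, …, u_{r-1}). -/
def pushList (w : List ℚ) : List ℚ :=
  if w = [] then [] else (-(w.sum)) :: w.dropLast


section SwapAriHelpers

theorem getD_take' (l : List ℚ) (n i : ℕ) :
    (l.take n).getD i 0 = if i < n then l.getD i 0 else 0 := by
  rcases lt_or_ge i n with h | h
  · rw [if_pos h]
    rcases lt_or_ge i l.length with h2 | h2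
    · rw [List.getD_eq_getElem _ _ (by simp; omega), List.getD_eq_getElem _ _ h2]
      simp [List.getElem_take]
    · rw [List.getD_eq_default _ _ (by simp; omega), List.getD_eq_default _ _ h2]
  · rw [if_neg (not_lt.2 h)]
    exact List.getD_eq_default _ _ (by simp; omega)

theorem getD_drop' (l : List ℚ) (n i : ℕ) :
    (l.drop n).getD i 0 = l.getD (n + i) 0 := by
  rcases lt_or_ge (n + i) l.length with h2 | h2
  · rw [List.getD_eq_getElem _ _ (by simp; omega), List.getD_eq_getElem _ _ h2]
    simp [List.getElem_drop]
  · rw [List.getD_eq_default _ _ (by simp; omega), List.getD_eq_default _ _ h2]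

theorem getD_append' (l₁ l₂ : List ℚ) (i : ℕ) :
    (l₁ ++ l₂).getD i 0 = if i < l₁.length then l₁.getD i 0 else l₂.getD (i - l₁.length) 0 := by
  rcases lt_or_ge i l₁.length with h | h
  · rw [if_pos h]
    rw [List.getD_eq_getElem _ _ (by simp; omega), List.getD_eq_getElem _ _ h]
    exact List.getElem_append_left _
  · rw [if_neg (not_lt.2 h)]
    rcases lt_or_ge i (l₁.length + l₂.length) with h2 | h2
    · rw [List.getD_eq_getElem _ _ (by simp; omega), List.getD_eq_getElem _ _ (by omega)]
      rw [List.getElem_append_right h]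
    · rw [List.getD_eq_default _ _ (by simp; omega), List.getD_eq_default _ _ (by omega)]

theorem getD_map_sub (l : List ℚ) (c : ℚ) (i : ℕ) (h : i < l.length) :
    (l.map (fun x => x - c)).getD i 0 = l.getD i 0 - c := by
  rw [List.getD_eq_getElem _ _ (by simpa using h), List.getD_eq_getElem _ _ h]
  simp

theorem swapList_length (w : List ℚ) : (swapList w).length = w.length := by
  unfold swapList
  cases h : w.reverse with
  | nil => simp [List.reverse_eq_nil_iff.mp h]
  | cons x xs =>
    have hw : w.length = xs.length + 1 := by
      have := congrArg List.length h; simpa using this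
    simp [hw, List.length_zipWith]

theorem swapList_getD (w : List ℚ) (i : ℕ) (hi : i < w.length) :
    (swapList w).getD i 0 = w.getD (w.length - 1 - i) 0 - w.getD (w.length - i) 0 := by
  cases h : w.reverse with
  | nil => simp [List.reverse_eq_nil_iff.mp h] at hi
  | cons x xs =>
    have hw : w.length = xs.length + 1 := by
      have := congrArg List.length h; simpa using this
    have hrev : ∀ j : ℕ, j < w.length → w.reverse.getD j 0 = w.getD (w.length - 1 - j) 0 := by
      intro j hj
      rw [List.getD_eq_getElem _ _ (by simpa using hj), List.getD_eq_getElem _ _ (by omega)]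
      simp [List.getElem_reverse]
    have hsw : swapList w = x :: List.zipWith (fun p q => p - q) xs (x :: xs) := by
      unfold swapList; rw [h]
    rw [hsw]
    cases i with
    | zero =>
      have h0 : w.getD (w.length - 0) 0 = 0 := List.getD_eq_default _ _ (by omega)
      rw [h0]
      have := hrev 0 (by omega)
      rw [h] at this
      simpa using this
    | succ i =>
      have hix : i < xs.length := by omega
      rw [List.getD_cons_succ]
      rw [List.getD_eq_getElem _ _ (by simp [List.length_zipWith]; omega)]
      rw [List.getElem_zipWith]
      have h1 : xs[i] = w.reverse.getD (i+1) 0 := by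
        rw [h, List.getD_cons_succ, List.getD_eq_getElem _ _ hix]
      have h2 : (x :: xs)[i]'(by simp; omega) = w.reverse.getD i 0 := by
        rw [h, List.getD_eq_getElem _ _ (by simp; omega)]
      rw [h1, h2, hrev (i+1) (by omega), hrev i (by omega)]
      have e1 : w.length - 1 - i = w.length - (i+1) := by omega
      rw [e1]

theorem eq_of_getD (l₁ l₂ : List ℚ) (h : l₁.length = l₂.length)
    (he : ∀ i, i < l₁.length → l₁.getD i 0 = l₂.getD i 0) : l₁ = l₂ := by
  apply List.ext_getElem h
  intro i h1 h2
  have := he i h1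
  rwa [List.getD_eq_getElem _ _ h1, List.getD_eq_getElem _ _ h2] at this

theorem sum_take_swapList (w : List ℚ) (j : ℕ) (hj : j ≤ w.length) :
    ((swapList w).take j).sum = w.getD (w.length - j) 0 := by
  induction j with
  | zero => simp [List.getD_eq_default _ _ (by omega : w.length ≤ w.length - 0)]
  | succ j ih =>
    rw [List.sum_take_succ _ _ (by rw [swapList_length]; omega), ih (by omega)]
    rw [← List.getD_eq_getElem _ 0 _, swapList_getD w j (by omega)]
    have e : w.length - 1 - j = w.length - (j+1) := by omega
    rw [e]; ring

theorem sum_seg_swapList (w : List ℚ) (a b : ℕ) (hab : a ≤ b) (hb : b ≤ w.length) :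
    (((swapList w).take b).drop a).sum = w.getD (w.length - b) 0 - w.getD (w.length - a) 0 := by
  have key : ((swapList w).take b) = ((swapList w).take a) ++ (((swapList w).take b).drop a) := by
    conv_lhs => rw [← List.take_append_drop a ((swapList w).take b)]
    rw [List.take_take, min_eq_left hab]
  have hsum := congrArg List.sum key
  rw [List.sum_append, sum_take_swapList w b hb, sum_take_swapList w a (by omega)] at hsum
  linarith
theorem identI6 (w : List ℚ) (l : ℕ) (hl : l ≤ w.length) :
    swapList (w.drop l) = (swapList w).take (w.length - l) := by
  have hlen : (w.drop l).length = w.length - l := by simp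
  apply eq_of_getD
  · rw [swapList_length, hlen, List.length_take, swapList_length]; omega
  · intro i hi
    rw [swapList_length, hlen] at hi
    rw [swapList_getD _ i (by omega), getD_take', if_pos (by omega),
      swapList_getD w i (by omega), hlen, getD_drop', getD_drop']
    have e1 : l + (w.length - l - 1 - i) = w.length - 1 - i := by omega
    have e2 : l + (w.length - l - i) = w.length - i := by omega
    rw [e1, e2]

theorem identI2 (w : List ℚ) (k l : ℕ) (hkl : k ≤ l) (hl : l < w.length) :
    swapList (((w.take l).drop k).map (fun x => x - w.getD l 0))
      = ((swapList w).take (w.length - k)).drop (w.length - l) := by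
  have hlen : (((w.take l).drop k).map (fun x => x - w.getD l 0)).length = l - k := by
    simp; omega
  have hz : ∀ j, j < l - k →
      (((w.take l).drop k).map (fun x => x - w.getD l 0)).getD j 0
        = w.getD (k + j) 0 - w.getD l 0 := by
    intro j hj
    rw [getD_map_sub _ _ _ (by simp; omega), getD_drop', getD_take', if_pos (by omega)]
  have hz0 : (((w.take l).drop k).map (fun x => x - w.getD l 0)).getD (l - k) 0 = 0 :=
    List.getD_eq_default _ _ (by rw [hlen])
  apply eq_of_getD
  · rw [swapList_length, hlen, List.length_drop, List.length_take, swapList_length]; omega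
  · intro i hi
    rw [swapList_length, hlen] at hi
    rw [swapList_getD _ i (by omega), hlen]
    rw [getD_drop', getD_take', if_pos (by omega : w.length - l + i < w.length - k),
      swapList_getD w _ (by omega)]
    have e1 : w.length - 1 - (w.length - l + i) = l - 1 - i := by omega
    have e2 : w.length - (w.length - l + i) = l - i := by omega
    rw [e1, e2, hz (l - k - 1 - i) (by omega)]
    have e3 : k + (l - k - 1 - i) = l - 1 - i := by omega
    rw [e3]
    rcases Nat.eq_zero_or_pos i with h0 | h0
    · subst h0
      have e5 : l - k - 0 = l - k := by omega
      have e4 : l - 0 = l := by omega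
      rw [e5, hz0, e4]; ring
    · rw [hz (l - k - i) (by omega)]
      have e5 : k + (l - k - i) = l - i := by omega
      rw [e5]; ring

theorem identI1 (w : List ℚ) (k l : ℕ) (hk : 1 ≤ k) (hkl : k ≤ l) (hl : l ≤ w.length) :
    swapList (w.take k ++ w.drop l)
      = (swapList w).take (w.length - l)
        ++ [(((swapList w).take (w.length + 1 - k)).drop (w.length - l)).sum]
        ++ (swapList w).drop (w.length + 1 - k) := by
  have hlen : (w.take k ++ w.drop l).length = k + (w.length - l) := by simp; omega
  have hy : ∀ j, (w.take k ++ w.drop l).getD j 0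
      = if j < k then w.getD j 0 else w.getD (l + (j - k)) 0 := by
    intro j
    rw [getD_append', getD_take', getD_drop', List.length_take]
    have hmin : min k w.length = k := by omega
    rw [hmin]
    rcases lt_or_ge j k with hj | hj
    · rw [if_pos hj, if_pos hj, if_pos hj]
    · rw [if_neg (by omega), if_neg (by omega)]
  have hS : (((swapList w).take (w.length + 1 - k)).drop (w.length - l)).sum
      = w.getD (k - 1) 0 - w.getD l 0 := by
    rw [sum_seg_swapList w _ _ (by omega) (by omega)]
    have e1 : w.length - (w.length + 1 - k) = k - 1 := by omega
    have e2 : w.length - (w.length - l) = l := by omega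
    rw [e1, e2]
  have hT1len : ((swapList w).take (w.length - l)
      ++ [(((swapList w).take (w.length + 1 - k)).drop (w.length - l)).sum]).length
      = w.length - l + 1 := by
    rw [List.length_append, List.length_take, swapList_length, List.length_singleton]; omega
  have hT1take : ((swapList w).take (w.length - l)).length = w.length - l := by
    rw [List.length_take, swapList_length]; omega
  apply eq_of_getD
  · rw [swapList_length, hlen, List.length_append, hT1len, List.length_drop,
      swapList_length]; omega
  · intro i hi
    rw [swapList_length, hlen] at hi
    rw [swapList_getD _ i (by omega), hlen, hy, hy, getD_append', hT1len]
    rcases lt_trichotomy i (w.length - l) with hc | hc | hc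
    · rw [if_neg (show ¬(k + (w.length - l) - 1 - i < k) by omega),
        if_neg (show ¬(k + (w.length - l) - i < k) by omega),
        if_pos (show i < w.length - l + 1 by omega),
        getD_append', hT1take, if_pos (show i < w.length - l by omega),
        getD_take', if_pos (show i < w.length - l by omega),
        swapList_getD w i (by omega)]
      have e1 : l + (k + (w.length - l) - 1 - i - k) = w.length - 1 - i := by omega
      have e2 : l + (k + (w.length - l) - i - k) = w.length - i := by omega
      rw [e1, e2]
    · rw [if_pos (show k + (w.length - l) - 1 - i < k by omega),
        if_neg (show ¬(k + (w.length - l) - i < k) by omega),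
        if_pos (show i < w.length - l + 1 by omega),
        getD_append', hT1take, if_neg (show ¬(i < w.length - l) by omega)]
      have e0 : i - (w.length - l) = 0 := by omega
      rw [e0, List.getD_cons_zero, hS]
      have e1 : k + (w.length - l) - 1 - i = k - 1 := by omega
      have e2 : l + (k + (w.length - l) - i - k) = l := by omega
      rw [e1, e2]
    · rw [if_pos (show k + (w.length - l) - 1 - i < k by omega),
        if_pos (show k + (w.length - l) - i < k by omega),
        if_neg (show ¬(i < w.length - l + 1) by omega),
        getD_drop']
      have e0 : w.length + 1 - k + (i - (w.length - l + 1)) = l + i - k := by omega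
      rw [e0, swapList_getD w _ (by omega)]
      have e1 : k + (w.length - l) - 1 - i = w.length - 1 - (l + i - k) := by omega
      have e2 : k + (w.length - l) - i = w.length - (l + i - k) := by omega
      rw [e1, e2]

theorem identI3 (w : List ℚ) (k l : ℕ) (hk : 1 ≤ k) (hkl : k < l) (hl : l ≤ w.length) :
    swapList (((w.take l).drop k).map (fun x => x - w.getD (k - 1) 0))
      = pushList (((swapList w).take (w.length + 1 - k)).drop (w.length + 1 - l)) := by
  have hqlen : (((swapList w).take (w.length + 1 - k)).drop (w.length + 1 - l)).length
      = l - k := by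
    rw [List.length_drop, List.length_take, swapList_length]; omega
  have hqne : ((swapList w).take (w.length + 1 - k)).drop (w.length + 1 - l) ≠ [] := by
    intro h
    rw [h] at hqlen; simp at hqlen; omega
  have hpush : pushList (((swapList w).take (w.length + 1 - k)).drop (w.length + 1 - l))
      = (-((((swapList w).take (w.length + 1 - k)).drop (w.length + 1 - l)).sum))
        :: (((swapList w).take (w.length + 1 - k)).drop (w.length + 1 - l)).dropLast := by
    rw [pushList, if_neg hqne]
  have hzlen : (((w.take l).drop k).map (fun x => x - w.getD (k - 1) 0)).length = l - k := by
    simp; omega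
  have hz : ∀ j, j < l - k →
      (((w.take l).drop k).map (fun x => x - w.getD (k - 1) 0)).getD j 0
        = w.getD (k + j) 0 - w.getD (k - 1) 0 := by
    intro j hj
    rw [getD_map_sub _ _ _ (by simp; omega), getD_drop', getD_take', if_pos (by omega)]
  have hz0 : (((w.take l).drop k).map (fun x => x - w.getD (k - 1) 0)).getD (l - k) 0 = 0 :=
    List.getD_eq_default _ _ (by rw [hzlen])
  have hqs : ((((swapList w).take (w.length + 1 - k)).drop (w.length + 1 - l)).sum)
      = w.getD (k - 1) 0 - w.getD (l - 1) 0 := by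
    rw [sum_seg_swapList w _ _ (by omega) (by omega)]
    have e1 : w.length - (w.length + 1 - k) = k - 1 := by omega
    have e2 : w.length - (w.length + 1 - l) = l - 1 := by omega
    rw [e1, e2]
  have hqget : ∀ j, j < l - k →
      ((((swapList w).take (w.length + 1 - k)).drop (w.length + 1 - l))).getD j 0
        = w.getD (l - 1 - (j+1)) 0 - w.getD (l - (j+1)) 0 := by
    intro j hj
    rw [getD_drop', getD_take',
      if_pos (by omega : w.length + 1 - l + j < w.length + 1 - k),
      swapList_getD w _ (by omega)]
    have e1 : w.length - 1 - (w.length + 1 - l + j) = l - 1 - (j + 1) := by omega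
    have e2 : w.length - (w.length + 1 - l + j) = l - (j + 1) := by omega
    rw [e1, e2]
  apply eq_of_getD
  · rw [swapList_length, hzlen, hpush, List.length_cons, List.length_dropLast, hqlen]; omega
  · intro i hi
    rw [swapList_length, hzlen] at hi
    rw [swapList_getD _ i (by omega), hzlen, hpush]
    cases i with
    | zero =>
      rw [List.getD_cons_zero, hqs, hz (l - k - 1 - 0) (by omega)]
      have e5 : l - k - 0 = l - k := by omega
      rw [e5, hz0]
      have e1 : k + (l - k - 1 - 0) = l - 1 := by omega
      rw [e1]; ring
    | succ i =>
      rw [List.getD_cons_succ]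
      have hd : ((((swapList w).take (w.length + 1 - k)).drop (w.length + 1 - l))).dropLast.getD i 0
          = ((((swapList w).take (w.length + 1 - k)).drop (w.length + 1 - l))).getD i 0 := by
        rw [List.dropLast_eq_take, getD_take', if_pos (by omega)]
      rw [hd, hqget i (by omega), hz (l - k - 1 - (i+1)) (by omega), hz (l - k - (i+1)) (by omega)]
      have e1 : k + (l - k - 1 - (i+1)) = l - 1 - (i + 1) := by omega
      have e2 : k + (l - k - (i+1)) = l - (i + 1) := by omega
      rw [e1, e2]; ring


theorem reflect_range (n : ℕ) (g : ℕ → ℚ) :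
    ∑ j ∈ Finset.range (n+1), g j = ∑ j ∈ Finset.range (n+1), g (n - j) := by
  have h := Finset.sum_range_reflect g (n+1)
  have e : ∀ j, n + 1 - 1 - j = n - j := by omega
  simp only [e] at h
  exact h.symm

theorem double_reflect (n : ℕ) (F : ℕ → ℕ → ℚ) :
    ∑ k ∈ Finset.range (n+1), ∑ l ∈ Finset.range (n+1), F k l
      = ∑ k ∈ Finset.range (n+1), ∑ l ∈ Finset.range (n+1), F (n - l) (n - k) := by
  rw [Finset.sum_comm]
  rw [reflect_range n (fun a => ∑ b ∈ Finset.range (n+1), F b a)]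
  exact Finset.sum_congr rfl fun k _ => reflect_range n (fun b => F b (n - k))

theorem shift_range (n : ℕ) (φ : ℕ → ℚ) (h0 : φ 0 = 0) (hn : φ (n+1) = 0) :
    ∑ k ∈ Finset.range (n+1), φ (k+1) = ∑ k ∈ Finset.range (n+1), φ k := by
  have h1 := Finset.sum_range_succ' φ (n+1)
  have h2 := Finset.sum_range_succ φ (n+1)
  rw [h0] at h1
  rw [hn] at h2
  simp only [add_zero] at h1 h2
  rw [← h1, h2]

theorem collapse_zero (n : ℕ) (g : ℕ → ℚ) :
    ∑ k ∈ Finset.range (n+1), (if k = 0 then g k else 0) = g 0 := by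
  rw [Finset.sum_ite_eq' (Finset.range (n+1)) 0 g]
  simp

theorem collapse_top (n : ℕ) (g : ℕ → ℚ) :
    ∑ l ∈ Finset.range (n+1), (if l = n then g l else 0) = g n := by
  rw [Finset.sum_ite_eq' (Finset.range (n+1)) n g]
  simp

theorem stepV1 (A B : Mould) (w : List ℚ) :
    (∑ k ∈ Finset.range (w.length + 1), ∑ l ∈ Finset.range (w.length + 1),
      if k < l ∧ l < w.length then
        swapM A (w.take k ++ w.drop l) *
          swapM B (((w.take l).drop k).map (fun x => x - w.getD l 0))
      else 0)
    = (∑ k ∈ Finset.range (w.length + 1), ∑ l ∈ Finset.range (w.length + 1),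
        if 1 ≤ k ∧ k < l ∧ l < w.length then
          A ((swapList w).take k ++ [(((swapList w).take (l + 1)).drop k).sum]
              ++ (swapList w).drop (l + 1)) * B (((swapList w).take l).drop k)
        else 0)
      + ∑ k ∈ Finset.range (w.length + 1),
          (if 1 ≤ k ∧ k < w.length then
            A ((swapList w).take k) * B ((swapList w).drop k) else 0) := by
  rw [double_reflect]
  have hco : ∀ k : ℕ, (if 1 ≤ k ∧ k < w.length then
      A ((swapList w).take k) * B ((swapList w).drop k) else 0)
      = ∑ l ∈ Finset.range (w.length + 1), (if l = w.length then
          (if 1 ≤ k ∧ k < w.length then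
            A ((swapList w).take k) * B ((swapList w).drop k) else 0) else 0) := by
    intro k
    rw [collapse_top w.length (fun _ => if 1 ≤ k ∧ k < w.length then
      A ((swapList w).take k) * B ((swapList w).drop k) else 0)]
  rw [Finset.sum_congr rfl fun k (_ : k ∈ Finset.range (w.length + 1)) => hco k]
  rw [← Finset.sum_add_distrib]
  refine Finset.sum_congr rfl fun k hk => ?_
  rw [← Finset.sum_add_distrib]
  refine Finset.sum_congr rfl fun l hl => ?_
  simp only [Finset.mem_range] at hk hl
  by_cases hc : 1 ≤ k ∧ k < l
  · by_cases hlr : l < w.length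
    · rw [if_pos (by omega), if_pos (by omega), if_neg (by omega : ¬ l = w.length), add_zero]
      simp only [swapM]
      rw [identI1 w (w.length - l) (w.length - k) (by omega) (by omega) (by omega)]
      rw [identI2 w (w.length - l) (w.length - k) (by omega) (by omega)]
      have e1 : w.length - (w.length - k) = k := by omega
      have e2 : w.length + 1 - (w.length - l) = l + 1 := by omega
      have e3 : w.length - (w.length - l) = l := by omega
      rw [e1, e2, e3]
    · have hlw : l = w.length := by omega
      rw [if_pos (by omega), if_neg (by omega : ¬ (1 ≤ k ∧ k < l ∧ l < w.length)),
        if_pos hlw, if_pos (by omega : 1 ≤ k ∧ k < w.length), zero_add]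
      simp only [swapM]
      have e0 : w.length - l = 0 := by omega
      rw [e0, List.take_zero, List.nil_append]
      rw [identI6 w (w.length - k) (by omega)]
      rw [identI2 w 0 (w.length - k) (by omega) (by omega)]
      have e1 : w.length - (w.length - k) = k := by omega
      have e2 : w.length - 0 = w.length := by omega
      rw [e1, e2]
      have e3 : (swapList w).take w.length = swapList w := by
        rw [← swapList_length]; exact List.take_length
      rw [e3]
  · have h1 : ¬ (w.length - l < w.length - k ∧ w.length - k < w.length) := by omega
    have h2 : ¬ (1 ≤ k ∧ k < l ∧ l < w.length) := by omega
    rw [if_neg h1, if_neg h2]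
    by_cases h3 : l = w.length
    · rw [if_pos h3, if_neg (by omega : ¬ (1 ≤ k ∧ k < w.length))]; ring
    · rw [if_neg h3]; ring

theorem stepV2 (A B : Mould) (hBpush : ∀ w : List ℚ, B (pushList w) = B w) (w : List ℚ) :
    (∑ k ∈ Finset.range (w.length + 1), ∑ l ∈ Finset.range (w.length + 1),
      if 1 ≤ k ∧ k < l ∧ l ≤ w.length then
        swapM A (w.take k ++ w.drop l) *
          swapM B (((w.take l).drop k).map (fun x => x - w.getD (k - 1) 0))
      else 0)
    = ∑ k ∈ Finset.range (w.length + 1), ∑ l ∈ Finset.range (w.length + 1),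
        if 1 ≤ k ∧ k < l ∧ l ≤ w.length then
          A ((swapList w).take (k - 1) ++ [(((swapList w).take l).drop (k - 1)).sum]
              ++ (swapList w).drop l) * B (((swapList w).take l).drop k)
        else 0 := by
  rw [double_reflect]
  have hpt : ∀ k ∈ Finset.range (w.length + 1), ∀ l ∈ Finset.range (w.length + 1),
      (if 1 ≤ w.length - l ∧ w.length - l < w.length - k ∧ w.length - k ≤ w.length then
        swapM A (w.take (w.length - l) ++ w.drop (w.length - k)) *
          swapM B (((w.take (w.length - k)).drop (w.length - l)).map
            (fun x => x - w.getD (w.length - l - 1) 0))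
      else 0)
      = (if 1 ≤ k + 1 ∧ k + 1 < l + 1 ∧ l + 1 ≤ w.length then
          A ((swapList w).take (k + 1 - 1) ++ [(((swapList w).take (l + 1)).drop (k + 1 - 1)).sum]
              ++ (swapList w).drop (l + 1)) * B (((swapList w).take (l + 1)).drop (k + 1))
        else 0) := by
    intro k hk l hl
    simp only [Finset.mem_range] at hk hl
    by_cases hc : k < l ∧ l < w.length
    · rw [if_pos (by omega), if_pos (by omega)]
      simp only [swapM]
      rw [identI1 w (w.length - l) (w.length - k) (by omega) (by omega) (by omega)]
      rw [identI3 w (w.length - l) (w.length - k) (by omega) (by omega) (by omega)]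
      rw [hBpush]
      have e1 : w.length - (w.length - k) = k := by omega
      have e2 : w.length + 1 - (w.length - l) = l + 1 := by omega
      have e3 : w.length + 1 - (w.length - k) = k + 1 := by omega
      have e4 : k + 1 - 1 = k := by omega
      rw [e1, e2, e3, e4]
    · rw [if_neg (by omega), if_neg (by omega)]
  rw [Finset.sum_congr rfl (fun k hk => Finset.sum_congr rfl (fun l hl => hpt k hk l hl))]
  have hinner : ∀ k ∈ Finset.range (w.length + 1),
      (∑ l ∈ Finset.range (w.length + 1),
        if 1 ≤ k + 1 ∧ k + 1 < l + 1 ∧ l + 1 ≤ w.length then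
          A ((swapList w).take (k + 1 - 1) ++ [(((swapList w).take (l + 1)).drop (k + 1 - 1)).sum]
              ++ (swapList w).drop (l + 1)) * B (((swapList w).take (l + 1)).drop (k + 1))
        else 0)
      = ∑ l ∈ Finset.range (w.length + 1),
          if 1 ≤ k + 1 ∧ k + 1 < l ∧ l ≤ w.length then
            A ((swapList w).take (k + 1 - 1) ++ [(((swapList w).take l).drop (k + 1 - 1)).sum]
                ++ (swapList w).drop l) * B (((swapList w).take l).drop (k + 1))
          else 0 := by
    intro k hk
    refine shift_range w.length (fun l =>
      if 1 ≤ k + 1 ∧ k + 1 < l ∧ l ≤ w.length then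
        A ((swapList w).take (k + 1 - 1) ++ [(((swapList w).take l).drop (k + 1 - 1)).sum]
            ++ (swapList w).drop l) * B (((swapList w).take l).drop (k + 1))
      else 0) ?_ ?_
    · exact if_neg (by omega)
    · exact if_neg (by omega)
  rw [Finset.sum_congr rfl hinner]
  refine shift_range w.length (fun k =>
    ∑ l ∈ Finset.range (w.length + 1),
      if 1 ≤ k ∧ k < l ∧ l ≤ w.length then
        A ((swapList w).take (k - 1) ++ [(((swapList w).take l).drop (k - 1)).sum]
            ++ (swapList w).drop l) * B (((swapList w).take l).drop k)
      else 0) ?_ ?_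
  · exact Finset.sum_eq_zero fun l _ => by rw [if_neg (by omega)]
  · exact Finset.sum_eq_zero fun l hl => by
      simp only [Finset.mem_range] at hl
      rw [if_neg (by omega)]

theorem stepMuV (A B : Mould) (hA0 : A [] = 0) (hB0 : B [] = 0) (w : List ℚ) :
    muM (swapM A) (swapM B) w
      = ∑ l ∈ Finset.range (w.length + 1),
          if 0 < l ∧ l < w.length then
            A ((swapList w).take 0 ++ [(((swapList w).take (l + 1)).drop 0).sum]
                ++ (swapList w).drop (l + 1)) * B (((swapList w).take l).drop 0)
          else 0 := by
  unfold muM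
  rw [reflect_range w.length (fun i => swapM A (w.take i) * swapM B (w.drop i))]
  refine Finset.sum_congr rfl fun i hi => ?_
  simp only [Finset.mem_range] at hi
  by_cases hc : 0 < i ∧ i < w.length
  · rw [if_pos hc]
    simp only [swapM]
    have hA : w.take (w.length - i) = w.take (w.length - i) ++ w.drop w.length := by
      rw [List.drop_length, List.append_nil]
    rw [hA, identI1 w (w.length - i) w.length (by omega) (by omega) (by omega)]
    rw [identI6 w (w.length - i) (by omega)]
    have e1 : w.length - w.length = 0 := by omega
    have e2 : w.length + 1 - (w.length - i) = i + 1 := by omega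
    have e3 : w.length - (w.length - i) = i := by omega
    rw [e1, e2, e3, List.drop_zero]
    have e4 : (swapList w).take i = ((swapList w).take i).drop 0 := by rw [List.drop_zero]
    rw [← e4]
  · rw [if_neg hc]
    rcases Nat.eq_zero_or_pos i with h0 | h0
    · subst h0
      have : w.drop (w.length - 0) = [] := by
        rw [Nat.sub_zero, List.drop_length]
      rw [this]
      have : swapList ([] : List ℚ) = [] := rfl
      simp only [swapM, this, hB0, mul_zero]
    · have hiw : i = w.length := by omega
      subst hiw
      have : w.take (w.length - w.length) = [] := by simp
      rw [this]
      have h2 : swapList ([] : List ℚ) = [] := rfl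
      simp only [swapM, h2, hA0, zero_mul]

theorem stepMuU (A B : Mould) (hA0 : A [] = 0) (hB0 : B [] = 0) (w : List ℚ) :
    muM A B (swapList w)
      = ∑ k ∈ Finset.range (w.length + 1),
          (if 1 ≤ k ∧ k < w.length then
            A ((swapList w).take k) * B ((swapList w).drop k) else 0) := by
  unfold muM
  rw [swapList_length]
  refine Finset.sum_congr rfl fun i hi => ?_
  simp only [Finset.mem_range] at hi
  by_cases hc : 1 ≤ i ∧ i < w.length
  · rw [if_pos hc]
  · rw [if_neg hc]
    rcases Nat.eq_zero_or_pos i with h0 | h0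
    · subst h0
      simp [hA0]
    · have hiw : i = w.length := by omega
      subst hiw
      have : (swapList w).drop w.length = [] := by
        rw [← swapList_length]; exact List.drop_length
      rw [this, hB0, mul_zero]

theorem splitFirstU (A B : Mould) (w : List ℚ) :
    (∑ k ∈ Finset.range (w.length + 1), ∑ l ∈ Finset.range (w.length + 1),
      if k < l ∧ l < w.length then
        A ((swapList w).take k ++ [(((swapList w).take (l + 1)).drop k).sum]
            ++ (swapList w).drop (l + 1)) * B (((swapList w).take l).drop k)
      else 0)
    = (∑ k ∈ Finset.range (w.length + 1), ∑ l ∈ Finset.range (w.length + 1),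
        if 1 ≤ k ∧ k < l ∧ l < w.length then
          A ((swapList w).take k ++ [(((swapList w).take (l + 1)).drop k).sum]
              ++ (swapList w).drop (l + 1)) * B (((swapList w).take l).drop k)
        else 0)
      + ∑ l ∈ Finset.range (w.length + 1),
          if 0 < l ∧ l < w.length then
            A ((swapList w).take 0 ++ [(((swapList w).take (l + 1)).drop 0).sum]
                ++ (swapList w).drop (l + 1)) * B (((swapList w).take l).drop 0)
          else 0 := by
  have hco : (∑ l ∈ Finset.range (w.length + 1),
      if 0 < l ∧ l < w.length then
        A ((swapList w).take 0 ++ [(((swapList w).take (l + 1)).drop 0).sum]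
            ++ (swapList w).drop (l + 1)) * B (((swapList w).take l).drop 0)
      else 0)
      = ∑ k ∈ Finset.range (w.length + 1), (if k = 0 then
          (∑ l ∈ Finset.range (w.length + 1),
            if 0 < l ∧ l < w.length then
              A ((swapList w).take k ++ [(((swapList w).take (l + 1)).drop k).sum]
                  ++ (swapList w).drop (l + 1)) * B (((swapList w).take l).drop k)
            else 0) else 0) := by
    rw [collapse_zero w.length]
  rw [hco, ← Finset.sum_add_distrib]
  refine Finset.sum_congr rfl fun k hk => ?_
  by_cases hk0 : k = 0
  · subst hk0
    rw [if_pos rfl]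
    have hz : (∑ l ∈ Finset.range (w.length + 1),
        if 1 ≤ 0 ∧ 0 < l ∧ l < w.length then
          A ((swapList w).take 0 ++ [(((swapList w).take (l + 1)).drop 0).sum]
              ++ (swapList w).drop (l + 1)) * B (((swapList w).take l).drop 0)
        else 0) = 0 := Finset.sum_eq_zero fun l _ => if_neg (by omega)
    rw [hz, zero_add]
  · rw [if_neg hk0, add_zero]
    refine Finset.sum_congr rfl fun l hl => ?_
    by_cases hc : k < l ∧ l < w.length
    · rw [if_pos hc, if_pos (by omega)]
    · rw [if_neg hc, if_neg (by omega)]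

theorem keyLemma (A B : Mould) (hA0 : A [] = 0) (hB0 : B [] = 0)
    (hBpush : ∀ w : List ℚ, B (pushList w) = B w) (w : List ℚ) :
    aritV (swapM B) (swapM A) w + muM (swapM A) (swapM B) w
      = aritU B A (swapList w) + muM A B (swapList w) := by
  have hV : aritV (swapM B) (swapM A) w
      = (∑ k ∈ Finset.range (w.length + 1), ∑ l ∈ Finset.range (w.length + 1),
          if k < l ∧ l < w.length then
            swapM A (w.take k ++ w.drop l) *
              swapM B (((w.take l).drop k).map (fun x => x - w.getD l 0))
          else 0)
        - ∑ k ∈ Finset.range (w.length + 1), ∑ l ∈ Finset.range (w.length + 1),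
            if 1 ≤ k ∧ k < l ∧ l ≤ w.length then
              swapM A (w.take k ++ w.drop l) *
                swapM B (((w.take l).drop k).map (fun x => x - w.getD (k - 1) 0))
            else 0 := rfl
  have hU : aritU B A (swapList w)
      = (∑ k ∈ Finset.range (w.length + 1), ∑ l ∈ Finset.range (w.length + 1),
          if k < l ∧ l < w.length then
            A ((swapList w).take k ++ [(((swapList w).take (l + 1)).drop k).sum]
                ++ (swapList w).drop (l + 1)) * B (((swapList w).take l).drop k)
          else 0)
        - ∑ k ∈ Finset.range (w.length + 1), ∑ l ∈ Finset.range (w.length + 1),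
            if 1 ≤ k ∧ k < l ∧ l ≤ w.length then
              A ((swapList w).take (k - 1) ++ [(((swapList w).take l).drop (k - 1)).sum]
                  ++ (swapList w).drop l) * B (((swapList w).take l).drop k)
            else 0 := by
    unfold aritU
    rw [swapList_length]
  rw [hV, hU, stepV1 A B w, stepV2 A B hBpush w, stepMuV A B hA0 hB0 w,
    stepMuU A B hA0 hB0 w, splitFirstU A B w]
  ring

end SwapAriHelpers

/-- For push-invariant moulds A, B, swap intertwines the (u-variable and v-variable) ari
brackets: ari(swap(A), swap(B)) = swap(ari(A,B)). -/
theorem swap_ari_push_invariant (A B : Mould) (hA0 : A [] = 0) (hB0 : B [] = 0)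
    (hApush : ∀ w : List ℚ, A (pushList w) = A w)
    (hBpush : ∀ w : List ℚ, B (pushList w) = B w) :
    ariV (swapM A) (swapM B) = swapM (ariU A B) := by
  funext w
  have k1 := keyLemma A B hA0 hB0 hBpush w
  have k2 := keyLemma B A hB0 hA0 hApush w
  simp only [ariV, ariU, luM, swapM] at *
  linarith
end

section
/- The operators arit satisfy arit(B)∘arit(A) - arit(A)∘arit(B) = arit(ari(A,B)) for all moulds A, B with A(∅)=B(∅)=0. -/
def sg (w : List ℚ) (a c : ℕ) : List ℚ := (w.take c).drop a

def ct (w : List ℚ) (a c : ℕ) : List ℚ := w.take a ++ [(sg w a c).sum] ++ w.drop c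

lemma sg_nil {w : List ℚ} {a c : ℕ} (h : c ≤ a) : sg w a c = [] := by
  apply List.drop_eq_nil_of_le
  simp [List.length_take]
  omega

lemma length_sg {w : List ℚ} {a c : ℕ} (h : c ≤ w.length) : (sg w a c).length = c - a := by
  simp [sg, List.length_take]
  omega

lemma sg_zero (w : List ℚ) (c : ℕ) : sg w 0 c = w.take c := by simp [sg]

lemma sg_length (w : List ℚ) (a : ℕ) : sg w a w.length = w.drop a := by
  simp [sg]

lemma sg_sg {w : List ℚ} {p q x y : ℕ} (h : p + y ≤ q) :
    sg (sg w p q) x y = sg w (p + x) (p + y) := by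
  simp only [sg, List.take_drop, List.take_take, List.drop_drop]
  rw [Nat.min_eq_left h]

lemma sg_append {w : List ℚ} {a b c : ℕ} (h1 : a ≤ b) (h2 : b ≤ c) (hc : c ≤ w.length) :
    sg w a b ++ sg w b c = sg w a c := by
  have e1 : sg w a b = ((w.take c).take b).drop a := by
    rw [List.take_take, Nat.min_eq_left h2]; rfl
  rw [e1, sg, sg]
  conv_rhs => rw [← List.take_append_drop b (w.take c)]
  rw [List.drop_append]
  have e2 : a - ((w.take c).take b).length = 0 := by
    rw [List.length_take, List.length_take]
    omega
  rw [e2, List.drop_zero]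

lemma sg_sum {w : List ℚ} {a b c : ℕ} (h1 : a ≤ b) (h2 : b ≤ c) (hc : c ≤ w.length) :
    (sg w a b).sum + (sg w b c).sum = (sg w a c).sum := by
  rw [← List.sum_append, sg_append h1 h2 hc]

lemma sg_drop {w : List ℚ} (a c s : ℕ) : (sg w a c).drop s = sg w (a + s) c := by
  simp [sg, List.drop_drop]

lemma sg_take {w : List ℚ} {a c s : ℕ} (h : a + s ≤ c) : (sg w a c).take s = sg w a (a + s) := by
  simpa [sg_zero] using sg_sg (w := w) (p := a) (q := c) (x := 0) (y := s) h

lemma length_ct {w : List ℚ} {a c : ℕ} (h1 : a ≤ c) (h2 : c ≤ w.length) :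
    (ct w a c).length = a + 1 + (w.length - c) := by
  simp [ct, List.length_take]
  omega

lemma ct_take_left {w : List ℚ} {a c t : ℕ} (ht : t ≤ a) (ha : a ≤ w.length) :
    (ct w a c).take t = w.take t := by
  rw [ct, List.take_append, List.take_append]
  have h1 : (w.take a).length = a := by simp [List.length_take]; omega
  have h2 : (List.take t (List.take a w)) = w.take t := by
    rw [List.take_take, Nat.min_eq_left ht]
  have h3 : t - (w.take a).length = 0 := by omega
  have h4 : t - (w.take a ++ [(sg w a c).sum]).length = 0 := by simp; omega
  rw [h2, h3, h4]
  simp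

lemma ct_drop_left {w : List ℚ} {a c t : ℕ} (ht : t ≤ a) (ha : a ≤ w.length) :
    (ct w a c).drop t = sg w t a ++ [(sg w a c).sum] ++ w.drop c := by
  rw [ct, List.drop_append, List.drop_append]
  have h1 : (w.take a).length = a := by simp [List.length_take]; omega
  have h3 : t - (w.take a).length = 0 := by omega
  have h4 : t - (w.take a ++ [(sg w a c).sum]).length = 0 := by simp; omega
  rw [h3, h4]
  simp [sg]

lemma ct_take_right {w : List ℚ} {a c t : ℕ} (ht : a + 1 ≤ t) (ha : a ≤ w.length) :
    (ct w a c).take t = w.take a ++ [(sg w a c).sum] ++ sg w c (c + (t - a - 1)) := by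
  rw [ct, List.take_append, List.take_append]
  have h1 : (w.take a).length = a := by simp [List.length_take]; omega
  have h2 : (List.take t (List.take a w)) = w.take a := by
    rw [List.take_take, Nat.min_eq_right (by omega)]
  have h3 : List.take (t - (w.take a).length) [(sg w a c).sum] = [(sg w a c).sum] := by
    rw [h1]
    have : t - a = (t - a - 1) + 1 := by omega
    rw [this]; simp
  have h4 : t - (w.take a ++ [(sg w a c).sum]).length = t - a - 1 := by simp; omega
  rw [h2, h3, h4]
  congr 1
  rw [sg, List.take_drop]

lemma ct_drop_right {w : List ℚ} {a c t : ℕ} (ht : a + 1 ≤ t) (ha : a ≤ w.length) :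
    (ct w a c).drop t = w.drop (c + (t - a - 1)) := by
  rw [ct, List.drop_append, List.drop_append]
  have h1 : (w.take a).length = a := by simp [List.length_take]; omega
  have h2 : List.drop t (List.take a w) = [] := by
    apply List.drop_eq_nil_of_le; simp [List.length_take]; omega
  have h3 : List.drop (t - (w.take a).length) [(sg w a c).sum] = [] := by
    apply List.drop_eq_nil_of_le; simp; omega
  have h4 : t - (w.take a ++ [(sg w a c).sum]).length = t - a - 1 := by simp; omega
  rw [h2, h3, h4, List.drop_drop]
  simp only [List.nil_append]

lemma shift1 (n k : ℕ) (f : ℕ → ℚ) :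
    ∑ l ∈ Finset.range (n+1), (if k < l ∧ l < n then f (l+1) else 0)
      = ∑ c ∈ Finset.range (n+1), (if k + 1 < c then f c else 0) := by
  rw [Finset.sum_range_succ, Finset.sum_range_succ' (f := fun c => if k+1 < c then f c else 0)]
  simp only [lt_irrefl, and_false, if_false, add_zero, Nat.not_lt_zero, if_neg (by omega : ¬ k+1 < 0)]
  refine Finset.sum_congr rfl fun l hl => ?_
  simp only [Finset.mem_range] at hl
  rw [if_congr (show (k < l ∧ l < n) ↔ (k+1 < l+1) by omega) rfl rfl]

lemma shift2 (n : ℕ) (g : ℕ → ℚ) (h : g n = 0) :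
    ∑ k ∈ Finset.range (n+1), (if 1 ≤ k then g (k-1) else 0) = ∑ a ∈ Finset.range (n+1), g a := by
  rw [Finset.sum_range_succ' (f := fun k => if 1 ≤ k then g (k-1) else 0),
      Finset.sum_range_succ (f := g), h]
  simp

lemma aritU_eq (B A : Mould) (w : List ℚ) :
    aritU B A w = ∑ a ∈ Finset.range (w.length+1), ∑ c ∈ Finset.range (w.length+1),
      (if a < c then A (ct w a c) * (B (sg w a (c-1)) - B (sg w (a+1) c)) else 0) := by
  set r := w.length with hr
  have e1 : (∑ k ∈ Finset.range (r + 1), ∑ l ∈ Finset.range (r + 1),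
      if k < l ∧ l < r then
        A (w.take k ++ [((w.take (l + 1)).drop k).sum] ++ w.drop (l + 1)) *
          B ((w.take l).drop k) else 0)
      = ∑ a ∈ Finset.range (r+1), ∑ c ∈ Finset.range (r+1),
        (if a + 1 < c then A (ct w a c) * B (sg w a (c-1)) else 0) := by
    refine Finset.sum_congr rfl fun k _ => ?_
    have := shift1 r k (fun c => A (ct w k c) * B (sg w k (c-1)))
    rw [← this]
    refine Finset.sum_congr rfl fun l hl => ?_
    simp only [Finset.mem_range] at hl
    split
    · simp [ct, sg]
    · rfl
  have e2 : (∑ k ∈ Finset.range (r + 1), ∑ l ∈ Finset.range (r + 1),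
      if 1 ≤ k ∧ k < l ∧ l ≤ r then
        A (w.take (k - 1) ++ [((w.take l).drop (k - 1)).sum] ++ w.drop l) *
          B ((w.take l).drop k) else 0)
      = ∑ a ∈ Finset.range (r+1), ∑ c ∈ Finset.range (r+1),
        (if a + 1 < c then A (ct w a c) * B (sg w (a+1) c) else 0) := by
    set G : ℕ → ℚ := fun a => ∑ l ∈ Finset.range (r+1),
      (if a+1 < l ∧ l ≤ r then
        A (w.take a ++ [((w.take l).drop a).sum] ++ w.drop l) *
          B ((w.take l).drop (a+1)) else 0) with hG
    have stepA : (∑ k ∈ Finset.range (r + 1), ∑ l ∈ Finset.range (r + 1),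
        if 1 ≤ k ∧ k < l ∧ l ≤ r then
          A (w.take (k - 1) ++ [((w.take l).drop (k - 1)).sum] ++ w.drop l) *
            B ((w.take l).drop k) else 0)
        = ∑ k ∈ Finset.range (r+1), (if 1 ≤ k then G (k-1) else 0) := by
      refine Finset.sum_congr rfl fun k _ => ?_
      by_cases h1 : 1 ≤ k
      · rw [if_pos h1, hG]
        obtain ⟨k', rfl⟩ : ∃ k', k = k' + 1 := ⟨k - 1, by omega⟩
        simp only [Nat.add_sub_cancel]
        refine Finset.sum_congr rfl fun l _ => ?_
        rw [if_congr (show (1 ≤ k'+1 ∧ k'+1 < l ∧ l ≤ r) ↔ (k'+1 < l ∧ l ≤ r) by omega) rfl rfl]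
      · rw [if_neg h1]
        apply Finset.sum_eq_zero
        intro l _
        rw [if_neg (by omega)]
    have stepB : ∀ a, G a = ∑ c ∈ Finset.range (r+1),
        (if a + 1 < c then A (ct w a c) * B (sg w (a+1) c) else 0) := by
      intro a
      rw [hG]
      refine Finset.sum_congr rfl fun c hc => ?_
      simp only [Finset.mem_range] at hc
      rw [if_congr (show (a+1 < c ∧ c ≤ r) ↔ (a+1 < c) by omega) rfl rfl]
      split
      · simp [ct, sg]
      · rfl
    have gtop : G r = 0 := by
      rw [hG]
      apply Finset.sum_eq_zero
      intro l hl
      simp only [Finset.mem_range] at hl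
      rw [if_neg (by omega)]
    rw [stepA, shift2 r G gtop]
    exact Finset.sum_congr rfl fun a _ => stepB a
  rw [aritU]
  simp only [← hr]
  rw [e1, e2, ← Finset.sum_sub_distrib]
  refine Finset.sum_congr rfl fun a _ => ?_
  rw [← Finset.sum_sub_distrib]
  refine Finset.sum_congr rfl fun c _ => ?_
  by_cases h1 : a + 1 < c
  · rw [if_pos h1, if_pos h1, if_pos (by omega), mul_sub]
  · by_cases h2 : c = a + 1
    · subst h2
      rw [if_neg h1, if_neg h1, if_pos (by omega)]
      rw [show a + 1 - 1 = a from rfl]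
      rw [sg_nil (le_refl a), sg_nil (le_refl (a+1))]
      simp
    · rw [if_neg h1, if_neg h1, if_neg (by omega)]
      simp

def co (X : Mould) (w : List ℚ) (a c : ℕ) : ℚ := X (sg w a (c-1)) - X (sg w (a+1) c)

lemma aritU_eq' (B A : Mould) (w : List ℚ) :
    aritU B A w = ∑ a ∈ Finset.range (w.length+1), ∑ c ∈ Finset.range (w.length+1),
      (if a < c then A (ct w a c) * co B w a c else 0) := by
  simp only [co]
  exact aritU_eq B A w

lemma dl_ct_top {u : List ℚ} {i : ℕ} : (ct u i u.length).dropLast = u.take i := by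
  rw [ct, List.drop_length]
  simp

lemma dl_ct {u : List ℚ} {i j : ℕ} (hij : i ≤ j) (hj : j < u.length) :
    (ct u i j).dropLast = u.take i ++ [(sg u i j).sum] ++ sg u j (u.length - 1) := by
  rw [List.dropLast_eq_take, length_ct hij (by omega)]
  rw [ct_take_right (by omega) (by omega)]
  congr 2
  omega

lemma tl_ct_bot {u : List ℚ} {j : ℕ} : (ct u 0 j).tail = u.drop j := by
  simp [ct]

lemma tl_ct {u : List ℚ} {i j : ℕ} (hi : 1 ≤ i) (him : i ≤ u.length) :
    (ct u i j).tail = sg u 1 i ++ [(sg u i j).sum] ++ u.drop j := by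
  rw [← List.drop_one, ct_drop_left hi him]

lemma sg_of_take {u : List ℚ} {k x y : ℕ} (hy : y ≤ k) : sg (u.take k) x y = sg u x y := by
  simp [sg, List.take_take, Nat.min_eq_left hy]

lemma sg_of_drop (u : List ℚ) (d x y : ℕ) : sg (u.drop d) x y = sg u (d + x) (d + y) := by
  simp [sg, List.take_drop, List.drop_drop]

lemma dlu_take {u : List ℚ} {i : ℕ} (hi : i ≤ u.length - 1) : u.dropLast.take i = u.take i := by
  rw [List.dropLast_eq_take, List.take_take, Nat.min_eq_left hi]

lemma dlu_drop (u : List ℚ) (i : ℕ) : u.dropLast.drop i = sg u i (u.length - 1) := by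
  rw [List.dropLast_eq_take]; rfl

lemma sg_of_dropLast {u : List ℚ} {x y : ℕ} (hy : y ≤ u.length - 1) :
    sg u.dropLast x y = sg u x y := by
  rw [List.dropLast_eq_take, sg_of_take hy]

lemma tlu_take (u : List ℚ) (i : ℕ) : u.tail.take i = sg u 1 (i+1) := by
  rw [← List.drop_one, sg, List.take_drop, Nat.add_comm 1 i]

lemma tlu_drop (u : List ℚ) (i : ℕ) : u.tail.drop i = u.drop (i+1) := by
  rw [← List.drop_one, List.drop_drop, Nat.add_comm 1 i]

lemma sg_of_tail (u : List ℚ) (x y : ℕ) : sg u.tail x y = sg u (x+1) (y+1) := by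
  rw [← List.drop_one, sg_of_drop, Nat.add_comm 1 x, Nat.add_comm 1 y]

lemma ct_dropLast {u : List ℚ} {i j : ℕ} (hij : i ≤ j) (hj : j ≤ u.length - 1) :
    ct (u.dropLast) i j = u.take i ++ [(sg u i j).sum] ++ sg u j (u.length - 1) := by
  rw [ct, dlu_take (by omega), dlu_drop, sg_of_dropLast hj]

lemma ct_tail (u : List ℚ) (i j : ℕ) :
    ct (u.tail) i j = sg u 1 (i+1) ++ [(sg u (i+1) (j+1)).sum] ++ u.drop (j+1) := by
  rw [ct, tlu_take, tlu_drop, sg_of_tail]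

lemma lemA1 (X Y : Mould) (u : List ℚ) (hm : 1 ≤ u.length) :
    ∑ i ∈ Finset.range (u.length+1), ∑ j ∈ Finset.range (u.length+1),
      (if i < j then X ((ct u i j).dropLast) * co Y u i j else 0)
    = aritU Y X u.dropLast + ∑ i ∈ Finset.range u.length, X (u.take i) * co Y u i u.length := by
  have step1 : ∀ i, (∑ j ∈ Finset.range (u.length+1),
        (if i < j then X ((ct u i j).dropLast) * co Y u i j else 0))
      = (∑ j ∈ Finset.range u.length, (if i < j then X ((ct u i j).dropLast) * co Y u i j else 0))
        + (if i < u.length then X ((ct u i u.length).dropLast) * co Y u i u.length else 0) :=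
    fun i => Finset.sum_range_succ _ u.length
  rw [Finset.sum_congr rfl (fun i _ => step1 i), Finset.sum_add_distrib]
  congr 1
  · rw [aritU_eq']
    have hr : u.dropLast.length + 1 = u.length := by rw [List.length_dropLast]; omega
    rw [hr]
    rw [Finset.sum_range_succ]
    have top : (∑ j ∈ Finset.range u.length,
        (if u.length < j then X ((ct u u.length j).dropLast) * co Y u u.length j else 0)) = 0 := by
      apply Finset.sum_eq_zero; intro j hj; simp only [Finset.mem_range] at hj
      rw [if_neg (by omega)]
    rw [top, add_zero]
    refine Finset.sum_congr rfl fun i hi => ?_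
    refine Finset.sum_congr rfl fun j hj => ?_
    simp only [Finset.mem_range] at hi hj
    by_cases h : i < j
    · rw [if_pos h, if_pos h]
      rw [dl_ct (by omega) (by omega), ct_dropLast (by omega) (by omega)]
      rw [co, co, sg_of_dropLast (by omega), sg_of_dropLast (by omega)]
    · rw [if_neg h, if_neg h]
  · rw [Finset.sum_range_succ, if_neg (lt_irrefl u.length), add_zero]
    refine Finset.sum_congr rfl fun i hi => ?_
    simp only [Finset.mem_range] at hi
    rw [if_pos hi, dl_ct_top]

lemma lemA2 (X Y : Mould) (u : List ℚ) (hm : 1 ≤ u.length) :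
    ∑ i ∈ Finset.range (u.length+1), ∑ j ∈ Finset.range (u.length+1),
      (if i < j then X ((ct u i j).tail) * co Y u i j else 0)
    = aritU Y X u.tail + ∑ j ∈ Finset.range u.length, X (u.drop (j+1)) * co Y u 0 (j+1) := by
  rw [Finset.sum_range_succ' (f := fun i => ∑ j ∈ Finset.range (u.length+1),
      (if i < j then X ((ct u i j).tail) * co Y u i j else 0))]
  congr 1
  · have inner : ∀ i, (∑ j ∈ Finset.range (u.length+1),
        (if i+1 < j then X ((ct u (i+1) j).tail) * co Y u (i+1) j else 0))
        = ∑ j ∈ Finset.range u.length,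
            (if i < j then X ((ct u (i+1) (j+1)).tail) * co Y u (i+1) (j+1) else 0) := by
      intro i
      rw [Finset.sum_range_succ'
        (f := fun j => (if i+1 < j then X ((ct u (i+1) j).tail) * co Y u (i+1) j else 0))]
      rw [if_neg (by omega), add_zero]
      refine Finset.sum_congr rfl fun j _ => ?_
      rw [if_congr (show (i+1 < j+1) ↔ (i < j) by omega) rfl rfl]
    rw [Finset.sum_congr rfl (fun i _ => inner i)]
    rw [aritU_eq']
    have hr : u.tail.length + 1 = u.length := by rw [List.length_tail]; omega
    rw [hr]
    refine Finset.sum_congr rfl fun i hi => ?_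
    refine Finset.sum_congr rfl fun j hj => ?_
    simp only [Finset.mem_range] at hi hj
    by_cases h : i < j
    · rw [if_pos h, if_pos h]
      rw [ct_tail, tl_ct (by omega) (by omega)]
      rw [co, co, sg_of_tail, sg_of_tail,
        show j - 1 + 1 = j by omega, show j + 1 - 1 = j by omega]
    · rw [if_neg h, if_neg h]
  · rw [Finset.sum_range_succ'
      (f := fun j => (if 0 < j then X ((ct u 0 j).tail) * co Y u 0 j else 0))]
    rw [if_neg (lt_irrefl 0), add_zero]
    refine Finset.sum_congr rfl fun j _ => ?_
    rw [if_pos (by omega), tl_ct_bot]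

lemma key (A B : Mould) (u : List ℚ) :
    ∑ i ∈ Finset.range (u.length+1), ∑ j ∈ Finset.range (u.length+1),
      (if i < j then
        (A ((ct u i j).dropLast) - A ((ct u i j).tail)) * co B u i j
          - (B ((ct u i j).dropLast) - B ((ct u i j).tail)) * co A u i j
       else 0)
    = ariU A B u.dropLast - ariU A B u.tail := by
  by_cases hm : u.length = 0
  · have hu : u = [] := List.eq_nil_of_length_eq_zero hm
    subst hu
    simp
  · have hm1 : 1 ≤ u.length := by omega
    have expand : ∀ i j : ℕ, (if i < j then
        (A ((ct u i j).dropLast) - A ((ct u i j).tail)) * co B u i j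
          - (B ((ct u i j).dropLast) - B ((ct u i j).tail)) * co A u i j
       else 0)
        = ((if i < j then A ((ct u i j).dropLast) * co B u i j else 0)
          - (if i < j then A ((ct u i j).tail) * co B u i j else 0))
          - ((if i < j then B ((ct u i j).dropLast) * co A u i j else 0)
          - (if i < j then B ((ct u i j).tail) * co A u i j else 0)) := by
      intro i j; split
      · ring
      · ring
    rw [Finset.sum_congr rfl (fun i _ => Finset.sum_congr rfl (fun j _ => expand i j))]
    simp only [Finset.sum_sub_distrib]
    rw [lemA1 A B u hm1, lemA2 A B u hm1, lemA1 B A u hm1, lemA2 B A u hm1]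
    have KC : ((∑ i ∈ Finset.range u.length, A (u.take i) * co B u i u.length)
          - (∑ j ∈ Finset.range u.length, A (u.drop (j+1)) * co B u 0 (j+1)))
          - ((∑ i ∈ Finset.range u.length, B (u.take i) * co A u i u.length)
          - (∑ j ∈ Finset.range u.length, B (u.drop (j+1)) * co A u 0 (j+1)))
        = luM A B u.dropLast - luM A B u.tail := by
      rw [luM, luM, muM, muM, muM, muM]
      have hL : u.dropLast.length + 1 = u.length := by rw [List.length_dropLast]; omega
      have hT : u.tail.length + 1 = u.length := by rw [List.length_tail]; omega
      rw [hL, hT]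
      simp only [← Finset.sum_sub_distrib]
      refine Finset.sum_congr rfl fun i hi => ?_
      simp only [Finset.mem_range] at hi
      rw [dlu_take (by omega), dlu_drop, tlu_take, tlu_drop]
      rw [co, co, co, co]
      rw [sg_length, show i + 1 - 1 = i by omega, sg_zero, show (0:ℕ)+1 = 1 from rfl]
      ring
    simp only [ariU]
    linarith [KC]

lemma drop_mid (l1 l2 : List ℚ) (x : ℚ) (s : ℕ) (hs : l1.length + 1 ≤ s) :
    (l1 ++ [x] ++ l2).drop s = l2.drop (s - l1.length - 1) := by
  rw [List.drop_append, List.drop_append]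
  rw [List.drop_eq_nil_of_le (by omega)]
  rw [List.drop_eq_nil_of_le (by simp; omega)]
  simp only [List.nil_append]
  congr 1
  simp
  omega

lemma drop_left2 (l1 l2 : List ℚ) (x : ℚ) (s : ℕ) (hs : s ≤ l1.length) :
    (l1 ++ [x] ++ l2).drop s = l1.drop s ++ [x] ++ l2 := by
  rw [List.drop_append, List.drop_append]
  rw [show s - l1.length = 0 by omega, show s - (l1 ++ [x]).length = 0 by simp; omega]
  simp

lemma sg_ct_left {w : List ℚ} {e f s t : ℕ} (ht : t ≤ e) (he : e ≤ w.length) :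
    sg (ct w e f) s t = sg w s t := by
  rw [sg, ct_take_left ht he]; rfl

lemma sg_ct_right {w : List ℚ} {e f s t : ℕ} (hs : e + 1 ≤ s) (ht : e + 1 ≤ t)
    (he : e ≤ w.length) :
    sg (ct w e f) s t = sg w (f + (s - e - 1)) (f + (t - e - 1)) := by
  rw [sg, ct_take_right ht he, drop_mid _ _ _ _ (by simp [List.length_take]; omega)]
  rw [List.length_take, Nat.min_eq_left he, sg_drop]

def dd (w : List ℚ) (p q a c : ℕ) : List ℚ :=
  w.take p ++ [(sg w p q).sum] ++ sg w q a ++ [(sg w a c).sum] ++ w.drop c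

lemma lemLD {w : List ℚ} {e f g h : ℕ} (hgh : g < h) (hhe : h ≤ e) (hef : e < f)
    (hfr : f ≤ w.length) :
    ct (ct w e f) g h = dd w g h e f := by
  rw [ct, ct_take_left (by omega) (by omega), ct_drop_left (by omega) (by omega),
    sg_ct_left (by omega) (by omega), dd]
  simp [List.append_assoc]

lemma co_ct_left {w : List ℚ} (X : Mould) {e f g h : ℕ} (hhe : h ≤ e) (he : e ≤ w.length) :
    co X (ct w e f) g h = co X w g h := by
  rw [co, co, sg_ct_left (by omega) (by omega), sg_ct_left (by omega) (by omega)]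

lemma lemRD {w : List ℚ} {e f g h : ℕ} (hef : e < f) (hfr : f ≤ w.length)
    (hg : e + 1 ≤ g) (hgh : g < h) (hh : h ≤ e + 1 + (w.length - f)) :
    ct (ct w e f) g h = dd w e f (g + (f - e - 1)) (h + (f - e - 1)) := by
  rw [ct, ct_take_right (by omega) (by omega), ct_drop_right (by omega) (by omega),
    sg_ct_right (by omega) (by omega) (by omega), dd,
    show f + (g - e - 1) = g + (f - e - 1) by omega,
    show f + (h - e - 1) = h + (f - e - 1) by omega]

lemma co_ct_right {w : List ℚ} (X : Mould) {e f g h : ℕ} (hef : e < f) (hfr : f ≤ w.length)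
    (hg : e + 1 ≤ g) (hgh : g < h) :
    co X (ct w e f) g h = co X w (g + (f - e - 1)) (h + (f - e - 1)) := by
  rw [co, co, sg_ct_right (by omega) (by omega) (by omega),
    sg_ct_right (by omega) (by omega) (by omega)]
  congr 3 <;> omega

section Elemmas
variable {w : List ℚ} {e f g h : ℕ}

lemma lemE1 (hef : e < f) (hfr : f ≤ w.length) (hge : g ≤ e) (hh : e + 1 ≤ h)
    (hhr : h ≤ e + 1 + (w.length - f)) :
    ct (ct w e f) g h = ct w g (h + (f - e) - 1) := by
  have hsg : sg (ct w e f) g h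
      = sg w g e ++ [(sg w e f).sum] ++ sg w f (h + (f - e) - 1) := by
    rw [sg, ct_take_right (by omega) (by omega)]
    rw [drop_left2 _ _ _ _ (by rw [List.length_take]; omega)]
    rw [show f + (h - e - 1) = h + (f - e) - 1 by omega]
    rfl
  have hsum : (sg w g e ++ [(sg w e f).sum] ++ sg w f (h + (f - e) - 1)).sum
      = (sg w g (h + (f - e) - 1)).sum := by
    rw [List.sum_append, List.sum_append]
    simp only [List.sum_cons, List.sum_nil, add_zero]
    rw [sg_sum hge (by omega) (by omega), sg_sum (by omega) (by omega) (by omega)]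
  rw [ct, ct_take_left hge (by omega), ct_drop_right (by omega) (by omega), hsg,
    show f + (h - e - 1) = h + (f - e) - 1 by omega, hsum, ct]

lemma lemE2 (hef : e < f) (hfr : f ≤ w.length) (hge : g ≤ e) (hh : e + 1 ≤ h)
    (hhr : h ≤ e + 1 + (w.length - f)) :
    sg (ct w e f) g (h - 1)
      = (ct (sg w g (h + (f - e) - 1)) (e - g) (f - g)).dropLast := by
  set q := h + (f - e) - 1 with hq
  have hqr : q ≤ w.length := by omega
  have hlu : (sg w g q).length = q - g := length_sg hqr
  by_cases hcase : h = e + 1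
  · -- f = q
    have hfq : f - g = (sg w g q).length := by rw [hlu]; omega
    rw [hfq, dl_ct_top, sg_take (by omega), show g + (e - g) = e by omega]
    rw [sg_ct_left (by omega) (by omega), hcase, show e + 1 - 1 = e from rfl]
  · have hh2 : e + 2 ≤ h := by omega
    rw [sg, ct_take_right (by omega) (by omega),
      drop_left2 _ _ _ _ (by rw [List.length_take]; omega)]
    rw [dl_ct (by omega) (by rw [hlu]; omega)]
    rw [sg_take (by omega), show g + (e - g) = e by omega]
    rw [sg_sg (by omega : g + (f - g) ≤ q), show g + (e - g) = e by omega,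
      show g + (f - g) = f by omega]
    rw [hlu, sg_sg (by omega : g + (q - g - 1) ≤ q), show g + (f - g) = f by omega,
      show g + (q - g - 1) = q - 1 by omega]
    rw [show f + (h - 1 - e - 1) = q - 1 by omega]
    rfl

lemma lemE3 (hef : e < f) (hfr : f ≤ w.length) (hge : g ≤ e) (hh : e + 1 ≤ h)
    (hhr : h ≤ e + 1 + (w.length - f)) :
    sg (ct w e f) (g + 1) h
      = (ct (sg w g (h + (f - e) - 1)) (e - g) (f - g)).tail := by
  set q := h + (f - e) - 1 with hq
  have hqr : q ≤ w.length := by omega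
  have hlu : (sg w g q).length = q - g := length_sg hqr
  by_cases hcase : g = e
  · subst hcase
    rw [show g - g = 0 by omega, tl_ct_bot, sg_drop, show g + (f - g) = f by omega]
    rw [sg, ct_take_right (by omega) (by omega),
      drop_mid _ _ _ _ (by rw [List.length_take]; omega)]
    rw [List.length_take, Nat.min_eq_left (by omega), sg_drop]
    congr 1 <;> omega
  · have hgl : g < e := by omega
    rw [tl_ct (by omega) (by rw [hlu]; omega)]
    rw [sg_sg (by omega : g + (e - g) ≤ q), show g + (e - g) = e by omega]
    rw [sg_sg (by omega : g + (f - g) ≤ q), show g + (e - g) = e by omega,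
      show g + (f - g) = f by omega]
    rw [sg_drop, show g + (f - g) = f by omega]
    rw [sg, ct_take_right (by omega) (by omega),
      drop_left2 _ _ _ _ (by rw [List.length_take]; omega)]
    rw [show f + (h - e - 1) = q by omega]
    rfl

end Elemmas

lemma sum2_ext (n N : ℕ) (hn : n ≤ N) (T : ℕ → ℕ → ℚ) :
    (∑ g ∈ Finset.range (n+1), ∑ h ∈ Finset.range (n+1), (if g < h ∧ h ≤ n then T g h else 0))
    = ∑ g ∈ Finset.range (N+1), ∑ h ∈ Finset.range (N+1),
        (if g < h ∧ h ≤ n then T g h else 0) := by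
  have inner : ∀ g, (∑ h ∈ Finset.range (n+1), (if g < h ∧ h ≤ n then T g h else 0))
      = ∑ h ∈ Finset.range (N+1), (if g < h ∧ h ≤ n then T g h else 0) := by
    intro g
    apply Finset.sum_subset (Finset.range_subset_range.2 (by omega))
    intro h _ hh
    simp only [Finset.mem_range, not_lt] at hh
    rw [if_neg (by omega)]
  rw [Finset.sum_congr rfl (fun g _ => inner g)]
  apply Finset.sum_subset (Finset.range_subset_range.2 (by omega))
  intro g _ hgn
  simp only [Finset.mem_range, not_lt] at hgn
  apply Finset.sum_eq_zero
  intro h _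
  rw [if_neg (by omega)]

def R4 (r : ℕ) : Finset ((ℕ × ℕ) × (ℕ × ℕ)) :=
  (Finset.range (r+1) ×ˢ Finset.range (r+1)) ×ˢ (Finset.range (r+1) ×ˢ Finset.range (r+1))

lemma sum_R4 (r : ℕ) (F : ℕ → ℕ → ℕ → ℕ → ℚ) :
    ∑ x ∈ R4 r, F x.1.1 x.1.2 x.2.1 x.2.2
      = ∑ e ∈ Finset.range (r+1), ∑ f ∈ Finset.range (r+1),
        ∑ g ∈ Finset.range (r+1), ∑ h ∈ Finset.range (r+1), F e f g h := by
  have step1 : ∑ x ∈ R4 r, F x.1.1 x.1.2 x.2.1 x.2.2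
      = ∑ a ∈ Finset.range (r+1) ×ˢ Finset.range (r+1),
        ∑ b ∈ Finset.range (r+1) ×ˢ Finset.range (r+1), F a.1 a.2 b.1 b.2 :=
    Finset.sum_product' _ _ (fun (a b : ℕ × ℕ) => F a.1 a.2 b.1 b.2)
  have step2 : ∀ a : ℕ × ℕ, (∑ b ∈ Finset.range (r+1) ×ˢ Finset.range (r+1), F a.1 a.2 b.1 b.2)
      = ∑ g ∈ Finset.range (r+1), ∑ h ∈ Finset.range (r+1), F a.1 a.2 g h :=
    fun a => Finset.sum_product' _ _ (fun g h => F a.1 a.2 g h)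
  have step3 : (∑ a ∈ Finset.range (r+1) ×ˢ Finset.range (r+1),
      ∑ g ∈ Finset.range (r+1), ∑ h ∈ Finset.range (r+1), F a.1 a.2 g h)
      = ∑ e ∈ Finset.range (r+1), ∑ f ∈ Finset.range (r+1),
        ∑ g ∈ Finset.range (r+1), ∑ h ∈ Finset.range (r+1), F e f g h :=
    Finset.sum_product' _ _ (fun e f => ∑ g ∈ Finset.range (r+1), ∑ h ∈ Finset.range (r+1), F e f g h)
  exact step1.trans ((Finset.sum_congr rfl fun a _ => step2 a).trans step3)

def DJ (Mo X Y : Mould) (w : List ℚ) : ℚ :=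
  ∑ x ∈ R4 w.length,
    if x.1.1 < x.1.2 ∧ x.1.2 ≤ x.2.1 ∧ x.2.1 < x.2.2 ∧ x.2.2 ≤ w.length
    then Mo (dd w x.1.1 x.1.2 x.2.1 x.2.2) * co X w x.1.1 x.1.2 * co Y w x.2.1 x.2.2 else 0

def NS (Mo X Y : Mould) (w : List ℚ) : ℚ :=
  ∑ x ∈ R4 w.length,
    if x.1.1 ≤ x.2.1 ∧ x.2.1 < x.2.2 ∧ x.2.2 ≤ x.1.2 ∧ x.1.2 ≤ w.length
    then Mo (ct w x.1.1 x.1.2)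
      * (X ((ct (sg w x.1.1 x.1.2) (x.2.1 - x.1.1) (x.2.2 - x.1.1)).dropLast)
         - X ((ct (sg w x.1.1 x.1.2) (x.2.1 - x.1.1) (x.2.2 - x.1.1)).tail))
      * co Y w x.2.1 x.2.2 else 0


lemma pieceL (Mo X Y : Mould) (w : List ℚ) :
    (∑ x ∈ R4 w.length,
      if ((x.1.1 < x.1.2 ∧ x.2.1 < x.2.2 ∧ x.2.2 ≤ x.1.1 + 1 + (w.length - x.1.2))
          ∧ x.2.2 ≤ x.1.1)
      then Mo (ct (ct w x.1.1 x.1.2) x.2.1 x.2.2)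
        * co X (ct w x.1.1 x.1.2) x.2.1 x.2.2 * co Y w x.1.1 x.1.2 else 0)
    = DJ Mo X Y w := by
  rw [DJ, ← Finset.sum_filter, ← Finset.sum_filter]
  apply Finset.sum_nbij' (i := fun x => (x.2, x.1)) (j := fun x => (x.2, x.1))
  · intro x hx
    rcases x with ⟨⟨e, f⟩, ⟨g, h⟩⟩
    simp only [R4, Finset.mem_filter, Finset.mem_product, Finset.mem_range] at hx ⊢
    omega
  · intro x hx
    rcases x with ⟨⟨g, h⟩, ⟨e, f⟩⟩
    simp only [R4, Finset.mem_filter, Finset.mem_product, Finset.mem_range] at hx ⊢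
    omega
  · intro x _; rfl
  · intro x _; rfl
  · intro x hx
    rcases x with ⟨⟨e, f⟩, ⟨g, h⟩⟩
    simp only [R4, Finset.mem_filter, Finset.mem_product, Finset.mem_range] at hx
    obtain ⟨⟨⟨he, hf⟩, hg, hh⟩, ⟨hef, hgh, hhL⟩, hhe⟩ := hx
    rw [lemLD hgh hhe hef (by omega), co_ct_left X hhe (by omega)]

lemma pieceR (Mo X Y : Mould) (w : List ℚ) :
    (∑ x ∈ R4 w.length,
      if ((x.1.1 < x.1.2 ∧ x.2.1 < x.2.2 ∧ x.2.2 ≤ x.1.1 + 1 + (w.length - x.1.2))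
          ∧ x.1.1 + 1 ≤ x.2.1)
      then Mo (ct (ct w x.1.1 x.1.2) x.2.1 x.2.2)
        * co X (ct w x.1.1 x.1.2) x.2.1 x.2.2 * co Y w x.1.1 x.1.2 else 0)
    = DJ Mo Y X w := by
  rw [DJ, ← Finset.sum_filter, ← Finset.sum_filter]
  apply Finset.sum_nbij'
    (i := fun x => (x.1, (x.2.1 + (x.1.2 - x.1.1 - 1), x.2.2 + (x.1.2 - x.1.1 - 1))))
    (j := fun x => (x.1, (x.2.1 - (x.1.2 - x.1.1 - 1), x.2.2 - (x.1.2 - x.1.1 - 1))))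
  · intro x hx
    rcases x with ⟨⟨e, f⟩, ⟨g, h⟩⟩
    simp only [R4, Finset.mem_filter, Finset.mem_product, Finset.mem_range] at hx ⊢
    omega
  · intro x hx
    rcases x with ⟨⟨e, f⟩, ⟨a, c⟩⟩
    simp only [R4, Finset.mem_filter, Finset.mem_product, Finset.mem_range] at hx ⊢
    omega
  · intro x hx
    rcases x with ⟨⟨e, f⟩, ⟨g, h⟩⟩
    simp only [R4, Finset.mem_filter, Finset.mem_product, Finset.mem_range] at hx
    simp only [Prod.mk.injEq, true_and, and_true]
    omega
  · intro x hx
    rcases x with ⟨⟨e, f⟩, ⟨a, c⟩⟩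
    simp only [R4, Finset.mem_filter, Finset.mem_product, Finset.mem_range] at hx
    simp only [Prod.mk.injEq, true_and, and_true]
    omega
  · intro x hx
    rcases x with ⟨⟨e, f⟩, ⟨g, h⟩⟩
    simp only [R4, Finset.mem_filter, Finset.mem_product, Finset.mem_range] at hx
    obtain ⟨⟨⟨he, hf⟩, hg, hh⟩, ⟨hef, hgh, hhL⟩, hge⟩ := hx
    rw [lemRD hef (by omega) hge hgh (by omega), co_ct_right X hef (by omega) hge hgh]
    ring

lemma pieceN (Mo X Y : Mould) (w : List ℚ) :
    (∑ x ∈ R4 w.length,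
      if ((x.1.1 < x.1.2 ∧ x.2.1 < x.2.2 ∧ x.2.2 ≤ x.1.1 + 1 + (w.length - x.1.2))
          ∧ x.2.1 ≤ x.1.1 ∧ x.1.1 + 1 ≤ x.2.2)
      then Mo (ct (ct w x.1.1 x.1.2) x.2.1 x.2.2)
        * co X (ct w x.1.1 x.1.2) x.2.1 x.2.2 * co Y w x.1.1 x.1.2 else 0)
    = NS Mo X Y w := by
  rw [NS, ← Finset.sum_filter, ← Finset.sum_filter]
  apply Finset.sum_nbij'
    (i := fun x => ((x.2.1, x.2.2 + (x.1.2 - x.1.1) - 1), x.1))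
    (j := fun x => (x.2, (x.1.1, x.1.2 - (x.2.2 - x.2.1) + 1)))
  · intro x hx
    rcases x with ⟨⟨e, f⟩, ⟨g, h⟩⟩
    simp only [R4, Finset.mem_filter, Finset.mem_product, Finset.mem_range] at hx ⊢
    omega
  · intro x hx
    rcases x with ⟨⟨p, q⟩, ⟨a, c⟩⟩
    simp only [R4, Finset.mem_filter, Finset.mem_product, Finset.mem_range] at hx ⊢
    omega
  · intro x hx
    rcases x with ⟨⟨e, f⟩, ⟨g, h⟩⟩
    simp only [R4, Finset.mem_filter, Finset.mem_product, Finset.mem_range] at hx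
    simp only [Prod.mk.injEq, true_and, and_true]
    omega
  · intro x hx
    rcases x with ⟨⟨p, q⟩, ⟨a, c⟩⟩
    simp only [R4, Finset.mem_filter, Finset.mem_product, Finset.mem_range] at hx
    simp only [Prod.mk.injEq, true_and, and_true]
    omega
  · intro x hx
    rcases x with ⟨⟨e, f⟩, ⟨g, h⟩⟩
    simp only [R4, Finset.mem_filter, Finset.mem_product, Finset.mem_range] at hx
    obtain ⟨⟨⟨he, hf⟩, hg, hh⟩, ⟨hef, hgh, hhL⟩, hge, hhe⟩ := hx
    rw [lemE1 hef (by omega) hge hhe (by omega)]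
    rw [co, lemE2 hef (by omega) hge hhe (by omega), lemE3 hef (by omega) hge hhe (by omega)]

lemma lemM1 (Mo X Y : Mould) (w : List ℚ) :
    aritU Y (aritU X Mo) w = DJ Mo X Y w + DJ Mo Y X w + NS Mo X Y w := by
  have inner : ∀ e f : ℕ, f ≤ w.length →
      (if e < f then (aritU X Mo) (ct w e f) * co Y w e f else 0)
      = ∑ g ∈ Finset.range (w.length+1), ∑ h ∈ Finset.range (w.length+1),
          (if e < f ∧ g < h ∧ h ≤ e + 1 + (w.length - f)
           then Mo (ct (ct w e f) g h) * co X (ct w e f) g h * co Y w e f else 0) := by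
    intro e f hf
    by_cases hef : e < f
    · rw [if_pos hef, aritU_eq' X Mo (ct w e f), length_ct (by omega) hf]
      rw [Finset.sum_mul]
      have step : ∀ g, (∑ h ∈ Finset.range (e + 1 + (w.length - f) + 1),
            (if g < h then Mo (ct (ct w e f) g h) * co X (ct w e f) g h else 0)) * co Y w e f
          = ∑ h ∈ Finset.range (e + 1 + (w.length - f) + 1),
              (if g < h ∧ h ≤ e + 1 + (w.length - f)
               then Mo (ct (ct w e f) g h) * co X (ct w e f) g h * co Y w e f else 0) := by
        intro g
        rw [Finset.sum_mul]
        refine Finset.sum_congr rfl fun h hh => ?_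
        simp only [Finset.mem_range] at hh
        rw [ite_mul, zero_mul,
          if_congr (show (g < h) ↔ (g < h ∧ h ≤ e + 1 + (w.length - f)) by omega) rfl rfl]
      rw [Finset.sum_congr rfl (fun g _ => step g)]
      rw [sum2_ext (e + 1 + (w.length - f)) w.length (by omega)
        (fun g h => Mo (ct (ct w e f) g h) * co X (ct w e f) g h * co Y w e f)]
      refine Finset.sum_congr rfl fun g _ => Finset.sum_congr rfl fun h _ => ?_
      rw [if_congr (show (g < h ∧ h ≤ e + 1 + (w.length - f))
          ↔ (e < f ∧ g < h ∧ h ≤ e + 1 + (w.length - f)) by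
            constructor
            · exact fun hc => ⟨hef, hc⟩
            · exact fun hc => hc.2) rfl rfl]
    · rw [if_neg hef]
      symm
      apply Finset.sum_eq_zero
      intro g _
      apply Finset.sum_eq_zero
      intro h _
      exact if_neg (fun hcon => hef hcon.1)
  rw [aritU_eq' Y (aritU X Mo) w]
  have main : (∑ e ∈ Finset.range (w.length+1), ∑ f ∈ Finset.range (w.length+1),
      (if e < f then (aritU X Mo) (ct w e f) * co Y w e f else 0))
      = ∑ x ∈ R4 w.length,
          (if x.1.1 < x.1.2 ∧ x.2.1 < x.2.2 ∧ x.2.2 ≤ x.1.1 + 1 + (w.length - x.1.2)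
           then Mo (ct (ct w x.1.1 x.1.2) x.2.1 x.2.2)
             * co X (ct w x.1.1 x.1.2) x.2.1 x.2.2 * co Y w x.1.1 x.1.2 else 0) := by
    rw [sum_R4 w.length (fun e f g h =>
      (if e < f ∧ g < h ∧ h ≤ e + 1 + (w.length - f)
       then Mo (ct (ct w e f) g h) * co X (ct w e f) g h * co Y w e f else 0))]
    refine Finset.sum_congr rfl fun e _ => Finset.sum_congr rfl fun f hf => ?_
    simp only [Finset.mem_range] at hf
    exact inner e f (by omega)
  rw [main]
  have split : ∀ x ∈ R4 w.length,
      (if x.1.1 < x.1.2 ∧ x.2.1 < x.2.2 ∧ x.2.2 ≤ x.1.1 + 1 + (w.length - x.1.2)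
       then Mo (ct (ct w x.1.1 x.1.2) x.2.1 x.2.2)
         * co X (ct w x.1.1 x.1.2) x.2.1 x.2.2 * co Y w x.1.1 x.1.2 else 0)
      = (if ((x.1.1 < x.1.2 ∧ x.2.1 < x.2.2 ∧ x.2.2 ≤ x.1.1 + 1 + (w.length - x.1.2))
            ∧ x.2.2 ≤ x.1.1)
         then Mo (ct (ct w x.1.1 x.1.2) x.2.1 x.2.2)
           * co X (ct w x.1.1 x.1.2) x.2.1 x.2.2 * co Y w x.1.1 x.1.2 else 0)
        + (if ((x.1.1 < x.1.2 ∧ x.2.1 < x.2.2 ∧ x.2.2 ≤ x.1.1 + 1 + (w.length - x.1.2))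
            ∧ x.1.1 + 1 ≤ x.2.1)
         then Mo (ct (ct w x.1.1 x.1.2) x.2.1 x.2.2)
           * co X (ct w x.1.1 x.1.2) x.2.1 x.2.2 * co Y w x.1.1 x.1.2 else 0)
        + (if ((x.1.1 < x.1.2 ∧ x.2.1 < x.2.2 ∧ x.2.2 ≤ x.1.1 + 1 + (w.length - x.1.2))
            ∧ x.2.1 ≤ x.1.1 ∧ x.1.1 + 1 ≤ x.2.2)
         then Mo (ct (ct w x.1.1 x.1.2) x.2.1 x.2.2)
           * co X (ct w x.1.1 x.1.2) x.2.1 x.2.2 * co Y w x.1.1 x.1.2 else 0) := by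
    intro x _
    rcases x with ⟨⟨e, f⟩, ⟨g, h⟩⟩
    dsimp only
    by_cases hP : e < f ∧ g < h ∧ h ≤ e + 1 + (w.length - f)
    · obtain ⟨h1, h2, h3⟩ := hP
      by_cases c1 : h ≤ e
      · rw [if_pos ⟨h1, h2, h3⟩, if_pos ⟨⟨h1, h2, h3⟩, c1⟩, if_neg (by omega),
          if_neg (by omega)]
        ring
      · by_cases c2 : e + 1 ≤ g
        · rw [if_pos ⟨h1, h2, h3⟩, if_neg (by omega), if_pos ⟨⟨h1, h2, h3⟩, c2⟩,
            if_neg (by omega)]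
          ring
        · rw [if_pos ⟨h1, h2, h3⟩, if_neg (by omega), if_neg (by omega),
            if_pos ⟨⟨h1, h2, h3⟩, by omega, by omega⟩]
          ring
    · rw [if_neg hP, if_neg (fun hc => hP hc.1), if_neg (fun hc => hP hc.1),
        if_neg (fun hc => hP hc.1)]
      ring
  rw [Finset.sum_congr rfl split, Finset.sum_add_distrib, Finset.sum_add_distrib,
    pieceL Mo X Y w, pieceR Mo X Y w, pieceN Mo X Y w]

lemma sg_dl {w : List ℚ} {p q : ℕ} (hpq : p < q) (hq : q ≤ w.length) :
    (sg w p q).dropLast = sg w p (q-1) := by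
  rw [List.dropLast_eq_take, length_sg hq, sg_take (show p + (q - p - 1) ≤ q by omega),
    show p + (q - p - 1) = q - 1 by omega]

lemma sg_tl (w : List ℚ) (p q : ℕ) : (sg w p q).tail = sg w (p+1) q := by
  rw [← List.drop_one, sg_drop]

lemma co_sg {w : List ℚ} (Y : Mould) {p q i j : ℕ} (hj : 1 ≤ j) (hpj : p + j ≤ q) :
    co Y (sg w p q) i j = co Y w (p+i) (p+j) := by
  rw [co, co, sg_sg (show p + (j-1) ≤ q by omega), sg_sg hpj,
    show p + (j-1) = p + j - 1 by omega, show p + (i+1) = (p+i) + 1 by omega]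

lemma reindex2 (p q r : ℕ) (hpq : p < q) (hq : q ≤ r) (G : ℕ → ℕ → ℚ) :
    (∑ i ∈ Finset.range (q - p + 1), ∑ j ∈ Finset.range (q - p + 1),
       (if i < j then G (p+i) (p+j) else 0))
    = ∑ a ∈ Finset.range (r+1), ∑ c ∈ Finset.range (r+1),
       (if p ≤ a ∧ a < c ∧ c ≤ q then G a c else 0) := by
  have L : (∑ i ∈ Finset.range (q - p + 1), ∑ j ∈ Finset.range (q - p + 1),
       (if i < j then G (p+i) (p+j) else 0))
      = ∑ y ∈ Finset.range (q - p + 1) ×ˢ Finset.range (q - p + 1),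
          (if y.1 < y.2 then G (p+y.1) (p+y.2) else 0) :=
    (Finset.sum_product' _ _ (fun i j => if i < j then G (p+i) (p+j) else 0)).symm
  have R : (∑ a ∈ Finset.range (r+1), ∑ c ∈ Finset.range (r+1),
       (if p ≤ a ∧ a < c ∧ c ≤ q then G a c else 0))
      = ∑ y ∈ Finset.range (r+1) ×ˢ Finset.range (r+1),
          (if p ≤ y.1 ∧ y.1 < y.2 ∧ y.2 ≤ q then G y.1 y.2 else 0) :=
    (Finset.sum_product' _ _ (fun a c => if p ≤ a ∧ a < c ∧ c ≤ q then G a c else 0)).symm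
  rw [L, R, ← Finset.sum_filter, ← Finset.sum_filter]
  apply Finset.sum_nbij' (i := fun y => (p + y.1, p + y.2)) (j := fun y => (y.1 - p, y.2 - p))
  · intro y hy
    rcases y with ⟨i, j⟩
    simp only [Finset.mem_filter, Finset.mem_product, Finset.mem_range] at hy ⊢
    omega
  · intro y hy
    rcases y with ⟨a, c⟩
    simp only [Finset.mem_filter, Finset.mem_product, Finset.mem_range] at hy ⊢
    omega
  · intro y hy
    rcases y with ⟨i, j⟩
    simp only [Finset.mem_filter, Finset.mem_product, Finset.mem_range] at hy
    simp only [Prod.mk.injEq]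
    omega
  · intro y hy
    rcases y with ⟨a, c⟩
    simp only [Finset.mem_filter, Finset.mem_product, Finset.mem_range] at hy
    simp only [Prod.mk.injEq]
    omega
  · intro y _
    rfl

lemma lemM2 (Mo A B : Mould) (w : List ℚ) :
    aritU (ariU A B) Mo w = NS Mo A B w - NS Mo B A w := by
  rw [aritU_eq' (ariU A B) Mo w]
  have rhs_eq : NS Mo A B w - NS Mo B A w
      = ∑ p ∈ Finset.range (w.length+1), ∑ q ∈ Finset.range (w.length+1),
        ∑ a ∈ Finset.range (w.length+1), ∑ c ∈ Finset.range (w.length+1),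
          ((if p ≤ a ∧ a < c ∧ c ≤ q ∧ q ≤ w.length
            then Mo (ct w p q)
              * (A ((ct (sg w p q) (a - p) (c - p)).dropLast)
                 - A ((ct (sg w p q) (a - p) (c - p)).tail)) * co B w a c else 0)
          - (if p ≤ a ∧ a < c ∧ c ≤ q ∧ q ≤ w.length
            then Mo (ct w p q)
              * (B ((ct (sg w p q) (a - p) (c - p)).dropLast)
                 - B ((ct (sg w p q) (a - p) (c - p)).tail)) * co A w a c else 0)) := by
    rw [NS, NS, ← Finset.sum_sub_distrib]
    exact sum_R4 w.length (fun p q a c =>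
      (if p ≤ a ∧ a < c ∧ c ≤ q ∧ q ≤ w.length
        then Mo (ct w p q)
          * (A ((ct (sg w p q) (a - p) (c - p)).dropLast)
             - A ((ct (sg w p q) (a - p) (c - p)).tail)) * co B w a c else 0)
      - (if p ≤ a ∧ a < c ∧ c ≤ q ∧ q ≤ w.length
        then Mo (ct w p q)
          * (B ((ct (sg w p q) (a - p) (c - p)).dropLast)
             - B ((ct (sg w p q) (a - p) (c - p)).tail)) * co A w a c else 0))
  rw [rhs_eq]
  refine Finset.sum_congr rfl fun p hp => Finset.sum_congr rfl fun q hq => ?_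
  simp only [Finset.mem_range] at hp hq
  by_cases hpq : p < q
  · rw [if_pos hpq, co]
    rw [← sg_dl hpq (by omega), ← sg_tl w p q, ← key A B (sg w p q), length_sg (by omega)]
    rw [Finset.mul_sum]
    have inner1 : ∀ i, Mo (ct w p q) * (∑ j ∈ Finset.range (q - p + 1),
        (if i < j then
          (A ((ct (sg w p q) i j).dropLast) - A ((ct (sg w p q) i j).tail)) * co B (sg w p q) i j
            - (B ((ct (sg w p q) i j).dropLast) - B ((ct (sg w p q) i j).tail)) * co A (sg w p q) i j
         else 0))
        = ∑ j ∈ Finset.range (q - p + 1),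
          (if i < j then
            Mo (ct w p q) * ((A ((ct (sg w p q) ((p+i) - p) ((p+j) - p)).dropLast)
                - A ((ct (sg w p q) ((p+i) - p) ((p+j) - p)).tail)) * co B w (p+i) (p+j)
              - (B ((ct (sg w p q) ((p+i) - p) ((p+j) - p)).dropLast)
                - B ((ct (sg w p q) ((p+i) - p) ((p+j) - p)).tail)) * co A w (p+i) (p+j))
           else 0) := by
      intro i
      rw [Finset.mul_sum]
      refine Finset.sum_congr rfl fun j hj => ?_
      simp only [Finset.mem_range] at hj
      rw [mul_ite, mul_zero]
      by_cases h : i < j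
      · rw [if_pos h, if_pos h, show (p+i) - p = i by omega, show (p+j) - p = j by omega,
          co_sg B (by omega) (by omega), co_sg A (by omega) (by omega)]
      · rw [if_neg h, if_neg h]
    rw [Finset.sum_congr rfl (fun i _ => inner1 i)]
    rw [reindex2 p q w.length hpq (by omega) (fun a c =>
      Mo (ct w p q) * ((A ((ct (sg w p q) (a - p) (c - p)).dropLast)
          - A ((ct (sg w p q) (a - p) (c - p)).tail)) * co B w a c
        - (B ((ct (sg w p q) (a - p) (c - p)).dropLast)
          - B ((ct (sg w p q) (a - p) (c - p)).tail)) * co A w a c))]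
    refine Finset.sum_congr rfl fun a _ => Finset.sum_congr rfl fun c _ => ?_
    by_cases hc : p ≤ a ∧ a < c ∧ c ≤ q
    · rw [if_pos hc, if_pos ⟨hc.1, hc.2.1, hc.2.2, by omega⟩,
        if_pos ⟨hc.1, hc.2.1, hc.2.2, by omega⟩]
      ring
    · rw [if_neg hc, if_neg (fun hcon => hc ⟨hcon.1, hcon.2.1, hcon.2.2.1⟩),
        if_neg (fun hcon => hc ⟨hcon.1, hcon.2.1, hcon.2.2.1⟩)]
      ring
  · rw [if_neg hpq]
    symm
    apply Finset.sum_eq_zero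
    intro a _
    apply Finset.sum_eq_zero
    intro c _
    rw [if_neg (by omega), if_neg (by omega)]
    exact sub_zero 0

/-- arit(B)∘arit(A) - arit(A)∘arit(B) = arit(ari(A,B)) as operators on moulds. -/
theorem arit_comm_eq_arit_ari (A B : Mould) (hA : A [] = 0) (hB : B [] = 0) :
    ∀ (M : Mould) (w : List ℚ),
      aritU B (aritU A M) w - aritU A (aritU B M) w = aritU (ariU A B) M w := by
  intro M w
  rw [lemM1 M A B w, lemM1 M B A w, lemM2 M A B w]
  ring
end

section
/- Let A be a polynomial-valued push-invariant mould concentrated in depth 3 that is divisible by (u_1+u_2+u_3) (i.e. A(u_1,u_2,u_3) = (u_1+u_2+u_3)·B(u_1,u_2,u_3) for a polynomial B). Then A is divisible by Δ_3 = u_1 u_2 u_3 (u_1+u_2+u_3). -/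
open MvPolynomial

lemma X_dvd_sub_aeval_update {σ R : Type*} [CommRing R] [DecidableEq σ] (i : σ)
    (f : MvPolynomial σ R) :
    X i ∣ f - aeval (Function.update X i (0 : MvPolynomial σ R)) f := by
  induction f using MvPolynomial.induction_on with
  | C a => simp
  | add p q hp hq =>
    have h := dvd_add hp hq
    rw [map_add]
    convert h using 1
    ring
  | mul_X p n hp =>
    rcases eq_or_ne n i with rfl | hn
    · rw [map_mul, aeval_X, Function.update_self, mul_zero, sub_zero]
      exact dvd_mul_left (X n) p
    · rw [map_mul, aeval_X, Function.update_of_ne hn, ← sub_mul]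
      exact hp.mul_right (X n)

lemma X_dvd_of_aeval_update {σ R : Type*} [CommRing R] [DecidableEq σ] (i : σ)
    (f : MvPolynomial σ R)
    (h : aeval (Function.update X i (0 : MvPolynomial σ R)) f = 0) : X i ∣ f := by
  have := X_dvd_sub_aeval_update i f
  rwa [h, sub_zero] at this

lemma ne_zero_of_eval_one {p : MvPolynomial (Fin 3) ℚ}
    (h : eval (fun _ => (1 : ℚ)) p ≠ 0) : p ≠ 0 := by
  intro hp; apply h; rw [hp, map_zero]

/-- Let A ∈ ℚ[u₁,u₂,u₃] be a push-invariant polynomial (a mould concentrated in depth 3),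
i.e. A(u₁,u₂,u₃) = A(-u₁-u₂-u₃, u₁, u₂), divisible by u₁+u₂+u₃.  Then A is divisible by
Δ₃ = u₁u₂u₃(u₁+u₂+u₃). -/
theorem push_invariant_div_sum_div_delta (A : MvPolynomial (Fin 3) ℚ)
    (hpush : aeval
        (![-(X 0) - X 1 - X 2, X 0, X 1] : Fin 3 → MvPolynomial (Fin 3) ℚ) A = A)
    (hdiv : ∃ B : MvPolynomial (Fin 3) ℚ, A = (X 0 + X 1 + X 2) * B) :
    ∃ C : MvPolynomial (Fin 3) ℚ, A = (X 0 * X 1 * X 2 * (X 0 + X 1 + X 2)) * C := by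
  obtain ⟨B, hB⟩ := hdiv
  set g : Fin 3 → MvPolynomial (Fin 3) ℚ := ![-(X 0) - X 1 - X 2, X 0, X 1] with hg
  have hu0 : Function.update X 0 (0 : MvPolynomial (Fin 3) ℚ) = ![0, X 1, X 2] := by
    funext i; fin_cases i <;> simp [Function.update]
  have hu1 : Function.update X 1 (0 : MvPolynomial (Fin 3) ℚ) = ![X 0, 0, X 2] := by
    funext i; fin_cases i <;> simp [Function.update]
  have hu2 : Function.update X 2 (0 : MvPolynomial (Fin 3) ℚ) = ![X 0, X 1, 0] := by
    funext i; fin_cases i <;> simp [Function.update]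
  -- A vanishes under any substitution whose coordinates sum to 0
  have hvanish : ∀ f : Fin 3 → MvPolynomial (Fin 3) ℚ,
      f 0 + f 1 + f 2 = 0 → aeval f A = 0 := by
    intro f hf
    rw [hB, map_mul, map_add, map_add, aeval_X, aeval_X, aeval_X, hf, zero_mul]
  -- iterate the push relation
  have hpush2 : aeval (![X 2, -(X 0) - X 1 - X 2, X 0] :
      Fin 3 → MvPolynomial (Fin 3) ℚ) A = A := by
    have heq : (fun i => aeval g (g i))
        = (![X 2, -(X 0) - X 1 - X 2, X 0] : Fin 3 → MvPolynomial (Fin 3) ℚ) := by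
      funext i; fin_cases i <;> simp [hg] <;> ring
    have h := comp_aeval_apply (aeval g) A (f := g)
    rw [hpush, heq, hpush] at h
    exact h.symm
  have hpush3 : aeval (![X 1, X 2, -(X 0) - X 1 - X 2] :
      Fin 3 → MvPolynomial (Fin 3) ℚ) A = A := by
    have heq : (fun i => aeval g
          ((![X 2, -(X 0) - X 1 - X 2, X 0] : Fin 3 → MvPolynomial (Fin 3) ℚ) i))
        = (![X 1, X 2, -(X 0) - X 1 - X 2] : Fin 3 → MvPolynomial (Fin 3) ℚ) := by
      funext i; fin_cases i <;> simp [hg] <;> ring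
    have h := comp_aeval_apply (aeval g) A
      (f := (![X 2, -(X 0) - X 1 - X 2, X 0] : Fin 3 → MvPolynomial (Fin 3) ℚ))
    rw [hpush2, heq, hpush] at h
    exact h.symm
  -- A vanishes when each variable is set to 0
  have hA0 : aeval (![0, X 1, X 2] : Fin 3 → MvPolynomial (Fin 3) ℚ) A = 0 := by
    have heq : (fun i => aeval (![X 1, X 2, -(X 1) - X 2] :
          Fin 3 → MvPolynomial (Fin 3) ℚ) (g i))
        = (![0, X 1, X 2] : Fin 3 → MvPolynomial (Fin 3) ℚ) := by
      funext i; fin_cases i <;> simp [hg] <;> ring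
    have h := comp_aeval_apply
      (aeval (![X 1, X 2, -(X 1) - X 2] : Fin 3 → MvPolynomial (Fin 3) ℚ)) A (f := g)
    rw [hpush, heq] at h
    rw [← h]
    apply hvanish
    show X 1 + X 2 + (-(X 1) - X 2) = 0
    ring
  have hA1 : aeval (![X 0, 0, X 2] : Fin 3 → MvPolynomial (Fin 3) ℚ) A = 0 := by
    have heq : (fun i => aeval (![X 2, -(X 0) - X 2, X 0] :
          Fin 3 → MvPolynomial (Fin 3) ℚ)
          ((![X 2, -(X 0) - X 1 - X 2, X 0] : Fin 3 → MvPolynomial (Fin 3) ℚ) i))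
        = (![X 0, 0, X 2] : Fin 3 → MvPolynomial (Fin 3) ℚ) := by
      funext i; fin_cases i <;> simp <;> ring
    have h := comp_aeval_apply
      (aeval (![X 2, -(X 0) - X 2, X 0] : Fin 3 → MvPolynomial (Fin 3) ℚ)) A
      (f := (![X 2, -(X 0) - X 1 - X 2, X 0] : Fin 3 → MvPolynomial (Fin 3) ℚ))
    rw [hpush2, heq] at h
    rw [← h]
    apply hvanish
    show X 2 + (-(X 0) - X 2) + X 0 = 0
    ring
  have hA2 : aeval (![X 0, X 1, 0] : Fin 3 → MvPolynomial (Fin 3) ℚ) A = 0 := by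
    have heq : (fun i => aeval (![-(X 0) - X 1, X 0, X 1] :
          Fin 3 → MvPolynomial (Fin 3) ℚ)
          ((![X 1, X 2, -(X 0) - X 1 - X 2] : Fin 3 → MvPolynomial (Fin 3) ℚ) i))
        = (![X 0, X 1, 0] : Fin 3 → MvPolynomial (Fin 3) ℚ) := by
      funext i; fin_cases i <;> simp <;> ring
    have h := comp_aeval_apply
      (aeval (![-(X 0) - X 1, X 0, X 1] : Fin 3 → MvPolynomial (Fin 3) ℚ)) A
      (f := (![X 1, X 2, -(X 0) - X 1 - X 2] : Fin 3 → MvPolynomial (Fin 3) ℚ))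
    rw [hpush3, heq] at h
    rw [← h]
    apply hvanish
    show (-(X 0) - X 1) + X 0 + X 1 = 0
    ring
  -- now peel off the factors
  rw [hB] at hA0 hA1 hA2
  simp only [map_mul] at hA0 hA1 hA2
  have hs0 : aeval (![0, X 1, X 2] : Fin 3 → MvPolynomial (Fin 3) ℚ)
      ((X 0 + X 1 + X 2 : MvPolynomial (Fin 3) ℚ)) = X 1 + X 2 := by simp
  rw [hs0] at hA0
  have h0 : aeval (![0, X 1, X 2] : Fin 3 → MvPolynomial (Fin 3) ℚ) B = 0 := by
    rcases mul_eq_zero.mp hA0 with h | h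
    · exact absurd h (ne_zero_of_eval_one (by simp))
    · exact h
  obtain ⟨B1, hB1⟩ := X_dvd_of_aeval_update 0 B (by rw [hu0]; exact h0)
  rw [hB1, map_mul] at hA1 hA2
  have hs1 : aeval (![X 0, 0, X 2] : Fin 3 → MvPolynomial (Fin 3) ℚ)
      ((X 0 + X 1 + X 2 : MvPolynomial (Fin 3) ℚ)) = X 0 + X 2 := by simp
  have hx1 : aeval (![X 0, 0, X 2] : Fin 3 → MvPolynomial (Fin 3) ℚ)
      (X 0 : MvPolynomial (Fin 3) ℚ) = X 0 := by simp
  rw [hs1, hx1] at hA1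
  have h1 : aeval (![X 0, 0, X 2] : Fin 3 → MvPolynomial (Fin 3) ℚ) B1 = 0 := by
    rcases mul_eq_zero.mp hA1 with h | h
    · exact absurd h (ne_zero_of_eval_one (by simp))
    · rcases mul_eq_zero.mp h with h' | h'
      · exact absurd h' (ne_zero_of_eval_one (by simp))
      · exact h'
  obtain ⟨B2, hB2⟩ := X_dvd_of_aeval_update 1 B1 (by rw [hu1]; exact h1)
  rw [hB2, map_mul] at hA2
  have hs2 : aeval (![X 0, X 1, 0] : Fin 3 → MvPolynomial (Fin 3) ℚ)
      ((X 0 + X 1 + X 2 : MvPolynomial (Fin 3) ℚ)) = X 0 + X 1 := by simp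
  have hx2 : aeval (![X 0, X 1, 0] : Fin 3 → MvPolynomial (Fin 3) ℚ)
      (X 0 : MvPolynomial (Fin 3) ℚ) = X 0 := by simp
  have hy2 : aeval (![X 0, X 1, 0] : Fin 3 → MvPolynomial (Fin 3) ℚ)
      (X 1 : MvPolynomial (Fin 3) ℚ) = X 1 := by simp
  rw [hs2, hx2, hy2] at hA2
  have h2 : aeval (![X 0, X 1, 0] : Fin 3 → MvPolynomial (Fin 3) ℚ) B2 = 0 := by
    rcases mul_eq_zero.mp hA2 with h | h
    · exact absurd h (ne_zero_of_eval_one (by simp))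
    · rcases mul_eq_zero.mp h with h' | h'
      · exact absurd h' (ne_zero_of_eval_one (by simp))
      · rcases mul_eq_zero.mp h' with h'' | h''
        · exact absurd h'' (ne_zero_of_eval_one (by simp))
        · exact h''
  obtain ⟨C, hC⟩ := X_dvd_of_aeval_update 2 B2 (by rw [hu2]; exact h2)
  exact ⟨C, by rw [hB, hB1, hB2, hC]; ring⟩
end
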